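/- arXiv:1210.6954 — 8 statements merged into one kernel-verified Lean document; each statement's English description precedes it below -/
import Mathlib

section
/- Let n, α, r be positive integers, δ ≥ 2 an integer, q ≥ 2 an integer, and let C be a code of length n over the alphabet F_q^α with |C| ≥ 2 that has (r, δ) locality. Set 𝓜 = log_q |C| (a real number). Then the minimum distance of C satisfies d_min(C) ≤ n − ⌈𝓜/α⌉ + 1 − (⌈𝓜/(r·α)⌉ − 1)·(δ − 1), where ⌈·⌉ denotes the ceiling of a real number. (This holds for arbitrary, possibly non-linear, codes.) -/
/-! Framework for (vector) codes of length `n` over an alphabet `A`: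
codewords are functions `Fin n → A`, `puncture` restricts codewords to a subset of
coordinates, `minDist` is the minimum Hamming distance between distinct codewords, and
`HasLocality C r δ` is the `(r, δ)` locality property. -/

/-- The punctured code `C|_S`: restrictions of the codewords of `C` to `S`. -/
def puncture {n : ℕ} {A : Type*} (C : Set (Fin n → A)) (S : Finset (Fin n)) :
    Set (↥S → A) :=
  (fun c => fun i : ↥S => c i) '' C

/-- Minimum (Hamming) distance of a code: the least Hamming distance between two
distinct codewords. -/
noncomputable def minDist {n : ℕ} {A : Type*} [DecidableEq A] (C : Set (Fin n → A)) : ℕ :=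
  sInf {d | ∃ c ∈ C, ∃ c' ∈ C, c ≠ c' ∧ hammingDist c c' = d}

/-- `C` has `(r, δ)` locality: every coordinate `i` lies in a set `Γ` of at most
`r + δ - 1` coordinates such that the punctured code `C|_Γ` has minimum distance at
least `δ` (i.e. any two distinct restricted codewords are at Hamming distance ≥ δ). -/
def HasLocality {n : ℕ} {A : Type*} [DecidableEq A] (C : Set (Fin n → A)) (r δ : ℕ) :
    Prop :=
  ∀ i : Fin n, ∃ Γ : Finset (Fin n), i ∈ Γ ∧ Γ.card ≤ r + δ - 1 ∧
    ∀ u ∈ puncture C Γ, ∀ v ∈ puncture C Γ, u ≠ v → δ ≤ hammingDist u v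

open Finset

section Aux

variable {n : ℕ} {A : Type*} [Fintype A] [DecidableEq A]
set_option linter.unusedSectionVars false

/-- Number of distinct restrictions of codewords of `C` to `S`. -/
def resN (C : Finset (Fin n → A)) (S : Finset (Fin n)) : ℕ :=
  (C.image (fun c => fun i : ↥S => c i)).card

lemma resN_mono (C : Finset (Fin n → A)) {S T : Finset (Fin n)} (h : S ⊆ T) :
    resN C S ≤ resN C T := by
  apply Finset.card_le_card_of_surjOn (fun u => fun i : ↥S => u ⟨i.1, h i.2⟩)
  rintro u hu
  simp only [coe_image, Set.mem_image] at hu ⊢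
  obtain ⟨c, hc, rfl⟩ := hu
  exact ⟨_, ⟨c, hc, rfl⟩, rfl⟩

lemma resN_univ (C : Finset (Fin n → A)) : resN C Finset.univ = C.card := by
  apply Finset.card_image_of_injective
  intro c c' h
  funext x
  exact congrFun h ⟨x, mem_univ x⟩

lemma resN_empty_le_one (C : Finset (Fin n → A)) : resN C ∅ ≤ 1 := by
  apply Finset.card_le_one.mpr
  intro a _ b _
  funext i
  exact absurd i.2 (Finset.notMem_empty i.1)

lemma resN_insert (C : Finset (Fin n → A)) (S : Finset (Fin n)) (a : Fin n) :
    resN C (insert a S) ≤ resN C S * Fintype.card A := by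
  have hinj : Function.Injective
      (fun u : (↥(insert a S) → A) =>
        ((fun i : ↥S => u ⟨i.1, mem_insert_of_mem i.2⟩, u ⟨a, mem_insert_self a S⟩) :
          (↥S → A) × A)) := by
    intro u v h
    obtain ⟨h1, h2⟩ := Prod.mk.injEq .. ▸ h
    funext x
    rcases Finset.mem_insert.1 x.2 with hx | hx
    · have : x = (⟨a, mem_insert_self a S⟩ : ↥(insert a S)) := Subtype.ext hx
      rw [this]; exact h2
    · exact congrFun h1 ⟨x.1, hx⟩
  calc resN C (insert a S)
      ≤ ((C.image (fun c => fun i : ↥S => c i)) ×ˢ (Finset.univ : Finset A)).card := by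
        apply Finset.card_le_card_of_injOn _ _ (Function.Injective.injOn hinj)
        rintro u hu
        simp only [Finset.mem_coe, Finset.mem_image] at hu
        obtain ⟨c, hc, rfl⟩ := hu
        exact Finset.mem_product.2 ⟨Finset.mem_image_of_mem _ hc, Finset.mem_univ _⟩
    _ = resN C S * Fintype.card A := by
        rw [Finset.card_product, Finset.card_univ]; rfl

lemma resN_union_le (C : Finset (Fin n → A)) (S U : Finset (Fin n)) :
    resN C (S ∪ U) ≤ resN C S * (Fintype.card A) ^ U.card := by
  classical
  induction U using Finset.induction_on with
  | empty => simpa using le_refl (resN C S)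
  | @insert a U ha ih =>
      have h1 : S ∪ insert a U = insert a (S ∪ U) := by
        rw [Finset.union_insert]
      rw [h1, Finset.card_insert_of_notMem ha]
      calc resN C (insert a (S ∪ U)) ≤ resN C (S ∪ U) * Fintype.card A := resN_insert ..
        _ ≤ (resN C S * Fintype.card A ^ U.card) * Fintype.card A :=
            Nat.mul_le_mul_right _ ih
        _ = resN C S * Fintype.card A ^ (U.card + 1) := by rw [pow_succ, mul_assoc]

/-- The `(r,δ)` locality "free coordinates" lemma: deleting at most `δ-1` coordinates
of a local group `Γ` does not decrease the number of restrictions. -/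
lemma resN_free (C : Finset (Fin n → A)) {δ : ℕ} {Γ : Finset (Fin n)}
    (hΓ : ∀ u ∈ puncture (↑C : Set (Fin n → A)) Γ, ∀ v ∈ puncture (↑C : Set (Fin n → A)) Γ,
      u ≠ v → δ ≤ hammingDist u v)
    {D : Finset (Fin n)} (hD : D ⊆ Γ) (hDcard : D.card < δ) (S : Finset (Fin n)) :
    resN C (S ∪ Γ) ≤ resN C (S ∪ (Γ \ D)) := by
  have hsub : S ∪ (Γ \ D) ⊆ S ∪ Γ :=
    Finset.union_subset_union_right (Finset.sdiff_subset)
  apply Finset.card_le_card_of_injOn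
    (fun u => fun i : ↥(S ∪ (Γ \ D)) => u ⟨i.1, hsub i.2⟩)
  · rintro u hu
    simp only [Finset.mem_coe, Finset.mem_image] at hu ⊢
    obtain ⟨c, hc, rfl⟩ := hu
    exact ⟨c, hc, rfl⟩
  · rintro u hu v hv huv
    simp only [coe_image, Set.mem_image, Finset.mem_coe] at hu hv
    obtain ⟨c, hc, rfl⟩ := hu
    obtain ⟨c', hc', rfl⟩ := hv
    have hagree : ∀ x (hx : x ∈ S ∪ (Γ \ D)), c x = c' x := by
      intro x hx
      exact congrFun huv ⟨x, hx⟩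
    have hpunct : (fun i : ↥Γ => c i) = (fun i : ↥Γ => c' i) := by
      by_contra hne
      have hdle : hammingDist (fun i : ↥Γ => c i) (fun i : ↥Γ => c' i) ≤ D.card := by
        show (Finset.univ.filter fun i : ↥Γ => c i.1 ≠ c' i.1).card ≤ D.card
        apply Finset.card_le_card_of_injOn (fun i => i.1)
        · intro x hx
          simp only [Finset.mem_coe, Finset.mem_filter] at hx
          by_contra hxD
          exact hx.2 (hagree x.1 (Finset.mem_union_right _ (Finset.mem_sdiff.2 ⟨x.2, hxD⟩)))
        · intro x _ y _ h
          exact Subtype.ext h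
      have hm1 : (fun i : ↥Γ => c i) ∈ puncture (↑C : Set (Fin n → A)) Γ := ⟨c, hc, rfl⟩
      have hm2 : (fun i : ↥Γ => c' i) ∈ puncture (↑C : Set (Fin n → A)) Γ := ⟨c', hc', rfl⟩
      have := hΓ _ hm1 _ hm2 hne
      omega
    funext x
    rcases Finset.mem_union.1 x.2 with hx | hx
    · exact hagree x.1 (Finset.mem_union_left _ hx)
    · exact congrFun hpunct ⟨x.1, hx⟩

lemma minDist_le_of_resN_lt (C : Finset (Fin n → A)) (S : Finset (Fin n))
    (h : resN C S < C.card) : minDist (↑C : Set (Fin n → A)) ≤ n - S.card := by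
  obtain ⟨c, hc, c', hc', hne, heq⟩ :=
    Finset.exists_ne_map_eq_of_card_lt_of_maps_to h
      (fun c hc => Finset.mem_image_of_mem (fun c => fun i : ↥S => c i) hc)
  have hdist : hammingDist c c' ≤ n - S.card := by
    show (Finset.univ.filter fun i => c i ≠ c' i).card ≤ n - S.card
    have hsubset : (Finset.univ.filter fun i => c i ≠ c' i) ⊆ Sᶜ := by
      intro x hx
      simp only [Finset.mem_filter] at hx
      simp only [Finset.mem_compl]
      intro hxS
      exact hx.2 (congrFun heq ⟨x, hxS⟩)
    calc (Finset.univ.filter fun i => c i ≠ c' i).card ≤ Sᶜ.card :=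
        Finset.card_le_card hsubset
      _ = n - S.card := by rw [Finset.card_compl, Fintype.card_fin]
  exact le_trans (Nat.sInf_le ⟨c, hc, c', hc', hne, rfl⟩) hdist

/-- The one-at-a-time "chain" lemma: if adding `U` to `S` pushes the number of
restrictions to at least `|C|`, there is an intermediate `V` that stops just below. -/
lemma resN_chain (C : Finset (Fin n → A)) :
    ∀ (N : ℕ) (U S : Finset (Fin n)), U.card ≤ N →
      resN C S < C.card → C.card ≤ resN C (S ∪ U) →
      ∃ V ⊆ U, resN C (S ∪ V) < C.card ∧ C.card ≤ resN C (S ∪ V) * Fintype.card A ∧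
        resN C (S ∪ V) ≤ resN C S * Fintype.card A ^ V.card := by
  intro N
  induction N with
  | zero =>
      intro U S hU h1 h2
      rw [Finset.card_eq_zero.1 (Nat.le_zero.1 hU)] at h2
      rw [Finset.union_empty] at h2
      omega
  | succ N ih =>
      intro U S hU h1 h2
      by_cases hcase : C.card ≤ resN C S * Fintype.card A
      · exact ⟨∅, Finset.empty_subset U, by simpa using h1, by simpa using hcase, by simp⟩
      · push_neg at hcase
        have hUS : ¬ U ⊆ S := by
          intro hsub
          rw [Finset.union_eq_left.2 hsub] at h2
          omega
        obtain ⟨u, huU, huS⟩ := Finset.not_subset.1 hUS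
        have hU' : (U.erase u).card ≤ N := by
          rw [Finset.card_erase_of_mem huU]
          have := Finset.card_pos.2 ⟨u, huU⟩
          omega
        have h1' : resN C (insert u S) < C.card :=
          lt_of_le_of_lt (resN_insert C S u) hcase
        have h2' : C.card ≤ resN C (insert u S ∪ U.erase u) := by
          rwa [Finset.insert_union, ← Finset.union_insert, Finset.insert_erase huU]
        obtain ⟨V', hV'sub, a1, a2, a3⟩ := ih (U.erase u) (insert u S) hU' h1' h2'
        have huV' : u ∉ V' := fun h => (Finset.mem_erase.1 (hV'sub h)).1 rfl
        have hSV : S ∪ insert u V' = insert u S ∪ V' := by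
          rw [Finset.union_insert, Finset.insert_union]
        refine ⟨insert u V', Finset.insert_subset huU (hV'sub.trans (Finset.erase_subset u U)),
          ?_, ?_, ?_⟩
        · rwa [hSV]
        · rwa [hSV]
        · rw [hSV, Finset.card_insert_of_notMem huV']
          calc resN C (insert u S ∪ V') ≤ resN C (insert u S) * Fintype.card A ^ V'.card := a3
            _ ≤ (resN C S * Fintype.card A) * Fintype.card A ^ V'.card :=
                Nat.mul_le_mul_right _ (resN_insert C S u)
            _ = resN C S * Fintype.card A ^ (V'.card + 1) := by rw [pow_succ]; ring

end Aux

section Loop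

variable {n : ℕ} {A : Type*} [Fintype A] [DecidableEq A]

lemma stop_state (C : Finset (Fin n → A)) (r δ : ℕ) (hr : 0 < r) (hδ : 2 ≤ δ)
    (hQ : 2 ≤ Fintype.card A)
    (hC : 2 ≤ C.card) (hloc : HasLocality (↑C : Set (Fin n → A)) r δ) :
    ∃ (S : Finset (Fin n)) (m k j : ℕ),
      resN C S < C.card ∧ C.card ≤ resN C S * Fintype.card A ∧
      resN C S ≤ Fintype.card A ^ m ∧ k ≤ j * r ∧
      C.card ≤ Fintype.card A ^ (k + r) ∧ m + j * (δ - 1) ≤ S.card := by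
  set Q := Fintype.card A with hQdef
  suffices h : ∀ fuel : ℕ, ∀ S : Finset (Fin n), ∀ k j : ℕ, n - S.card ≤ fuel →
      resN C S ≤ Q ^ k → resN C S < C.card → k ≤ j * r → k + j * (δ - 1) ≤ S.card →
      ∃ (S' : Finset (Fin n)) (m k' j' : ℕ),
        resN C S' < C.card ∧ C.card ≤ resN C S' * Q ∧
        resN C S' ≤ Q ^ m ∧ k' ≤ j' * r ∧
        C.card ≤ Q ^ (k' + r) ∧ m + j' * (δ - 1) ≤ S'.card by
    refine h n ∅ 0 0 (by simp) (by simpa using resN_empty_le_one C) ?_ (by simp) (by simp)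
    exact lt_of_le_of_lt (resN_empty_le_one C) (by omega)
  intro fuel
  induction fuel with
  | zero =>
      intro S k j hfuel hk hlt hkj hsize
      exfalso
      have h1 : S.card ≤ n := le_trans (Finset.card_le_univ S) (by simp)
      have h2 : S.card = n := by omega
      have : S = Finset.univ := by
        apply Finset.eq_univ_of_card
        simpa using h2
      rw [this, resN_univ] at hlt
      omega
  | succ f ih =>
      intro S k j hfuel hk hlt hkj hsize
      -- pick a coordinate outside S
      have hSne : S ≠ Finset.univ := by
        intro h
        rw [h, resN_univ] at hlt
        omega
      obtain ⟨i, hiS⟩ : ∃ i, i ∉ S := by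
        by_contra hcon
        push_neg at hcon
        exact hSne (Finset.eq_univ_iff_forall.2 hcon)
      obtain ⟨Γ, hiΓ, hΓcard, hΓdist⟩ := hloc i
      have hScard_lt : S.card < n := by
        have : S ⊂ Finset.univ := (Finset.ssubset_univ_iff).2 hSne
        have := Finset.card_lt_card this
        simpa using this
      have hSSΓ : S ⊂ S ∪ Γ :=
        (Finset.ssubset_iff_of_subset Finset.subset_union_left).2
          ⟨i, Finset.mem_union_right _ hiΓ, hiS⟩
      have hcardSΓ : S.card < (S ∪ Γ).card := Finset.card_lt_card hSSΓ
      have hfuel' : n - (S ∪ Γ).card ≤ f := by omega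
      have hEcard_le : (Γ \ S).card ≤ Γ.card := Finset.card_le_card Finset.sdiff_subset
      by_cases hsmall : (Γ \ S).card ≤ δ - 1
      · -- small case: the whole group is free
        have hfree : resN C (S ∪ Γ) ≤ resN C (S ∪ (Γ \ (Γ \ S))) :=
          resN_free C hΓdist Finset.sdiff_subset (by omega) S
        have heq : S ∪ (Γ \ (Γ \ S)) = S := by
          rw [sdiff_sdiff_right_self]
          exact Finset.union_eq_left.2 (Finset.inter_subset_right)
        rw [heq] at hfree
        exact ih (S ∪ Γ) k j hfuel' (le_trans hfree hk) (lt_of_le_of_lt hfree hlt) hkj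
          (le_trans hsize (le_trans (Finset.card_le_card Finset.subset_union_left) le_rfl))
      · -- big case
        push_neg at hsmall
        obtain ⟨D, hDE, hDcard⟩ := Finset.exists_subset_card_eq (s := Γ \ S) (n := δ - 1) (le_of_lt hsmall)
        have hDΓ : D ⊆ Γ := hDE.trans Finset.sdiff_subset
        set p : ℕ := (Γ \ S).card - (δ - 1) with hp
        have hp1 : 1 ≤ p := by omega
        have hpr : p ≤ r := by omega
        have hfree : resN C (S ∪ Γ) ≤ resN C (S ∪ (Γ \ D)) :=
          resN_free C hΓdist hDΓ (by omega) S
        have hU : S ∪ ((Γ \ D) \ S) = S ∪ (Γ \ D) := Finset.union_sdiff_self_eq_union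
        have hUcard : ((Γ \ D) \ S).card = p := by
          rw [sdiff_right_comm, Finset.card_sdiff_of_subset hDE, hDcard]
        have hkey : resN C (S ∪ Γ) ≤ resN C S * Q ^ p := by
          calc resN C (S ∪ Γ) ≤ resN C (S ∪ (Γ \ D)) := hfree
            _ = resN C (S ∪ ((Γ \ D) \ S)) := by rw [hU]
            _ ≤ resN C S * Q ^ ((Γ \ D) \ S).card := resN_union_le ..
            _ = resN C S * Q ^ p := by rw [hUcard]
        have hkp : resN C (S ∪ Γ) ≤ Q ^ (k + p) := by
          calc resN C (S ∪ Γ) ≤ resN C S * Q ^ p := hkey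
            _ ≤ Q ^ k * Q ^ p := Nat.mul_le_mul_right _ hk
            _ = Q ^ (k + p) := (pow_add Q k p).symm
        have hcardU : (S ∪ Γ).card = S.card + (Γ \ S).card := by
          rw [Finset.union_comm, ← Finset.card_sdiff_add_card]
          omega
        rcases lt_or_ge (resN C (S ∪ Γ)) C.card with hcont | hstop
        · -- continue the loop
          refine ih (S ∪ Γ) (k + p) (j + 1) hfuel' hkp hcont ?_ ?_
          · calc k + p ≤ j * r + r := Nat.add_le_add hkj hpr
              _ = (j + 1) * r := by ring
          · calc k + p + (j + 1) * (δ - 1)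
                = (k + j * (δ - 1)) + (p + (δ - 1)) := by ring
              _ ≤ S.card + (Γ \ S).card := Nat.add_le_add hsize (by omega)
              _ = (S ∪ Γ).card := hcardU.symm
        · -- stop: apply the chain lemma
          have hstop' : C.card ≤ resN C (S ∪ ((Γ \ D) \ S)) := by
            rw [hU]; exact le_trans hstop hfree
          obtain ⟨V, hVU, b1, b2, b3⟩ :=
            resN_chain C ((Γ \ D) \ S).card ((Γ \ D) \ S) S le_rfl hlt hstop'
          have hVdisj : Disjoint S V := by
            rw [Finset.disjoint_right]
            intro x hxV hxS
            exact (Finset.mem_sdiff.1 (hVU hxV)).2 hxS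
          have hcardSV : (S ∪ V).card = S.card + V.card :=
            Finset.card_union_of_disjoint hVdisj
          refine ⟨S ∪ V, k + V.card, k, j, b1, b2, ?_, hkj, ?_, ?_⟩
          · calc resN C (S ∪ V) ≤ resN C S * Q ^ V.card := b3
              _ ≤ Q ^ k * Q ^ V.card := Nat.mul_le_mul_right _ hk
              _ = Q ^ (k + V.card) := (pow_add Q k V.card).symm
          · calc C.card ≤ resN C (S ∪ Γ) := hstop
              _ ≤ Q ^ (k + p) := hkp
              _ ≤ Q ^ (k + r) := Nat.pow_le_pow_right (by omega) (by omega)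
          · calc k + V.card + j * (δ - 1) = (k + j * (δ - 1)) + V.card := by ring
              _ ≤ S.card + V.card := Nat.add_le_add hsize le_rfl
              _ = (S ∪ V).card := hcardSV.symm

/-- Main combinatorial lemma. -/
lemma main_comb (C : Finset (Fin n → A)) (r δ : ℕ) (hr : 0 < r) (hδ : 2 ≤ δ)
    (hQ : 2 ≤ Fintype.card A) (hC : 2 ≤ C.card)
    (hloc : HasLocality (↑C : Set (Fin n → A)) r δ)
    (A0 T0 : ℕ) (hA0 : Fintype.card A ^ A0 < C.card)
    (hT0 : Fintype.card A ^ (r * T0) < C.card) :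
    ∃ S : Finset (Fin n), resN C S < C.card ∧ A0 + T0 * (δ - 1) ≤ S.card := by
  obtain ⟨S, m, k, j, h1, h2, h3, h4, h5, h6⟩ := stop_state C r δ hr hδ hQ hC hloc
  set Q := Fintype.card A with hQdef
  have hA0m : A0 ≤ m := by
    have : Q ^ A0 < Q ^ (m + 1) := by
      calc Q ^ A0 < C.card := hA0
        _ ≤ resN C S * Q := h2
        _ ≤ Q ^ m * Q := Nat.mul_le_mul_right _ h3
        _ = Q ^ (m + 1) := (pow_succ Q m).symm
    have := (Nat.pow_lt_pow_iff_right (by omega)).1 this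
    omega
  have hT0j : T0 ≤ j := by
    have hlt : Q ^ (r * T0) < Q ^ (k + r) := lt_of_lt_of_le hT0 h5
    have hrT : r * T0 < k + r := (Nat.pow_lt_pow_iff_right (by omega)).1 hlt
    have : r * T0 < (j + 1) * r := by
      calc r * T0 < k + r := hrT
        _ ≤ j * r + r := Nat.add_le_add h4 le_rfl
        _ = (j + 1) * r := by ring
    have : T0 * r < (j + 1) * r := by rwa [mul_comm r T0] at this
    have := Nat.lt_of_mul_lt_mul_right this
    omega
  refine ⟨S, h1, le_trans ?_ h6⟩
  exact Nat.add_le_add hA0m (Nat.mul_le_mul_right _ hT0j)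

end Loop

/-- **Singleton-like bound for (possibly non-linear) `(r, δ, α)` locally repairable
codes** (Theorem 2 of Rawat–Koyluoglu–Silberstein–Vishwanath).  For a code `C` of
length `n` over the alphabet `F^α` (with `|F| = q`) having `(r, δ)` locality and
`|C| ≥ 2`, writing `𝓜 = log_q |C|`, the minimum distance satisfies
`d_min(C) ≤ n - ⌈𝓜/α⌉ + 1 - (⌈𝓜/(rα)⌉ - 1)(δ - 1)`. -/
theorem lrc_minimum_distance_bound
    {F : Type} [Fintype F] [DecidableEq F]
    (n α r δ q : ℕ) (hn : 0 < n) (hα : 0 < α) (hr : 0 < r) (hδ : 2 ≤ δ) (hq : 2 ≤ q)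
    (hF : Fintype.card F = q)
    (C : Finset (Fin n → (Fin α → F))) (hC : 2 ≤ C.card)
    (hloc : HasLocality (↑C : Set (Fin n → (Fin α → F))) r δ) :
    (minDist (↑C : Set (Fin n → (Fin α → F))) : ℝ) ≤
      (n : ℝ) - ((⌈Real.logb q C.card / α⌉ : ℤ) : ℝ) + 1 -
        (((⌈Real.logb q C.card / (r * α)⌉ : ℤ) : ℝ) - 1) * ((δ : ℝ) - 1) := by
  classical
  set M : ℝ := Real.logb q C.card with hMdef
  have hq1 : (1 : ℝ) < q := by exact_mod_cast hq
  have hq0 : (0 : ℝ) < q := by linarith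
  have hCpos : (1 : ℝ) < C.card := by exact_mod_cast hC
  have hM : 0 < M := Real.logb_pos hq1 hCpos
  have hαR : (0 : ℝ) < α := by exact_mod_cast hα
  have hrR : (0 : ℝ) < r := by exact_mod_cast hr
  have hcardA : Fintype.card (Fin α → F) = q ^ α := by
    rw [Fintype.card_fun, hF, Fintype.card_fin]
  have hQ2 : 2 ≤ Fintype.card (Fin α → F) := by
    rw [hcardA]
    calc 2 = 2 ^ 1 := (pow_one 2).symm
      _ ≤ 2 ^ α := Nat.pow_le_pow_right (by omega) hα
      _ ≤ q ^ α := Nat.pow_le_pow_left hq α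
  -- the two ceiling quantities
  have hcA1 : 1 ≤ ⌈M / α⌉ := Int.ceil_pos.2 (div_pos hM hαR) 
  have hcT1 : 1 ≤ ⌈M / (r * α)⌉ := Int.ceil_pos.2 (div_pos hM (by positivity))
  set A0 : ℕ := (⌈M / α⌉ - 1).toNat with hA0def
  set T0 : ℕ := (⌈M / (r * α)⌉ - 1).toNat with hT0def
  have hA0cast : (A0 : ℤ) = ⌈M / α⌉ - 1 := Int.toNat_of_nonneg (by omega)
  have hT0cast : (T0 : ℤ) = ⌈M / (r * α)⌉ - 1 := Int.toNat_of_nonneg (by omega)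
  have hA0R : (A0 : ℝ) = ((⌈M / α⌉ : ℤ) : ℝ) - 1 := by exact_mod_cast congrArg (Int.cast : ℤ → ℝ) hA0cast
  have hT0R : (T0 : ℝ) = ((⌈M / (r * α)⌉ : ℤ) : ℝ) - 1 := by
    exact_mod_cast congrArg (Int.cast : ℤ → ℝ) hT0cast
  have hrpowM : (q : ℝ) ^ M = C.card := Real.rpow_logb hq0 (by linarith) (by linarith)
  -- q ^ (α * A0) < |C|
  have hA0lt : (A0 : ℝ) < M / α := by
    have := Int.ceil_lt_add_one (M / α)
    rw [hA0R]; linarith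
  have hpowA : q ^ (α * A0) < C.card := by
    have h1 : ((α * A0 : ℕ) : ℝ) < M := by
      push_cast
      calc (α : ℝ) * A0 < α * (M / α) := by
            exact mul_lt_mul_of_pos_left hA0lt hαR
        _ = M := by field_simp
    have h2 : (q : ℝ) ^ ((α * A0 : ℕ) : ℝ) < (q : ℝ) ^ M :=
      (Real.rpow_lt_rpow_left_iff hq1).2 h1
    rw [Real.rpow_natCast, hrpowM] at h2
    exact_mod_cast h2
  have hT0lt : (T0 : ℝ) < M / (r * α) := by
    have := Int.ceil_lt_add_one (M / (r * α))
    rw [hT0R]; linarith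
  have hpowT : q ^ (α * (r * T0)) < C.card := by
    have h1 : ((α * (r * T0) : ℕ) : ℝ) < M := by
      push_cast
      calc (α : ℝ) * (r * T0) = (r * α) * T0 := by ring
        _ < (r * α) * (M / (r * α)) := by
            exact mul_lt_mul_of_pos_left hT0lt (by positivity)
        _ = M := by field_simp
    have h2 : (q : ℝ) ^ ((α * (r * T0) : ℕ) : ℝ) < (q : ℝ) ^ M :=
      (Real.rpow_lt_rpow_left_iff hq1).2 h1
    rw [Real.rpow_natCast, hrpowM] at h2
    exact_mod_cast h2
  -- apply the combinatorial lemma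
  obtain ⟨S, hS, hScard⟩ := main_comb C r δ hr hδ hQ2 hC hloc A0 T0
    (by rw [hcardA, ← pow_mul]; exact hpowA)
    (by rw [hcardA, ← pow_mul]; exact hpowT)
  have hd : minDist (↑C : Set (Fin n → (Fin α → F))) ≤ n - S.card :=
    minDist_le_of_resN_lt C S hS
  have hSn : S.card ≤ n := le_trans (Finset.card_le_univ S) (by simp)
  have hScardR : (A0 : ℝ) + (T0 : ℝ) * ((δ : ℝ) - 1) ≤ (S.card : ℝ) := by
    have : ((A0 + T0 * (δ - 1) : ℕ) : ℝ) ≤ (S.card : ℝ) := by exact_mod_cast hScard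
    push_cast [Nat.cast_sub (by omega : 1 ≤ δ)] at this
    linarith
  calc (minDist (↑C : Set (Fin n → (Fin α → F))) : ℝ)
      ≤ ((n - S.card : ℕ) : ℝ) := by exact_mod_cast hd
    _ = (n : ℝ) - S.card := by
        rw [Nat.cast_sub hSn]
    _ ≤ (n : ℝ) - ((⌈M / α⌉ : ℤ) : ℝ) + 1 -
        (((⌈M / (r * α)⌉ : ℤ) : ℝ) - 1) * ((δ : ℝ) - 1) := by
        have hgoal : ((⌈M / α⌉ : ℤ) : ℝ) = (A0 : ℝ) + 1 := by rw [hA0R]; ring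
        rw [hgoal, ← hT0R]
        linarith
end

section
/- Let K be a finite field with a subfield F of cardinality q, let t, α, n̂ be positive integers with t ≤ n̂, and let y_1, …, y_{tα} ∈ K be linearly independent over F. Let 𝔣(y) = ∑_{i=1}^{L} a_i y^{q^{i−1}} (with a_i ∈ K) be a linearized polynomial over K, and let Ĝ ∈ F^{tα × n̂α} be a generator matrix of an [n̂, tα, n̂ − t + 1, α]_q MDS array code. Define ĉ = (𝔣(y_1), …, 𝔣(y_{tα})) · Ĝ ∈ K^{n̂α}. Then: (a) every coordinate of ĉ satisfies ĉ_j = 𝔣(ỹ_j), where ỹ_j := ∑_{i=1}^{tα} Ĝ_{i,j} y_i lies in the F-linear span of {y_1, …, y_{tα}}; and (b) for every set S of s blocks (1 ≤ s ≤ n̂), the F-linear span of { ỹ_j : j a column index belonging to a block in S } has dimension exactly min{s, t}·α. In other words, any s of the n̂ vector symbols of ĉ correspond to evaluations of 𝔣 at min{s, t}·α points of K that are linearly independent over F and lie in the span of {y_1, …, y_{tα}}. -/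
/-- **Evaluations of a linearized polynomial after MDS array pre-coding remain
evaluations at linearly independent points** (Lemma 3 of
Rawat–Koyluoglu–Silberstein–Vishwanath).  `K` is a finite field with subfield `F` of
cardinality `q` (modelled by the extension `Algebra F K`); `f` is the evaluation map of
a linearized polynomial `𝔣(y) = ∑ a_i y^{q^{i-1}}`; `y_1, …, y_{tα} ∈ K` are linearly
independent over `F`; and `G` is a generator matrix (entries in `F`, columns grouped
into `nh` blocks of `α`) of an `[nh, tα, nh - t + 1, α]_q` MDS array code, i.e. every
`tα × tα` submatrix formed by `t` blocks of columns is of full rank `tα`.  Let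
`ĉ = (𝔣(y_1), …, 𝔣(y_{tα})) · G`.  Then (a) each `ĉ_j = 𝔣(ỹ_j)` with
`ỹ_j = ∑_i G_{i,j} y_i` in the `F`-span of the `y_i`; and (b) for every nonempty set
`S` of blocks, the `F`-span of the points `ỹ_j` with `j` in a block of `S` has
dimension exactly `min{|S|, t}·α`. -/
theorem linearized_polynomial_mds_array_evaluations
    {F K : Type} [Field F] [Field K] [Algebra F K] [Fintype F] [Fintype K]
    (q : ℕ) (hq : Fintype.card F = q)
    (t α nh L : ℕ) (ht : 0 < t) (hα : 0 < α) (htn : t ≤ nh)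
    (y : Fin (t * α) → K) (hy : LinearIndependent F y)
    (a : Fin L → K)
    (f : K → K) (hf : ∀ z, f z = ∑ i : Fin L, a i * z ^ q ^ (i : ℕ))
    (G : Matrix (Fin (t * α)) (Fin nh × Fin α) F)
    (hG : ∀ B : Finset (Fin nh), B.card = t →
      (G.submatrix id (fun pr : ↥B × Fin α => ((pr.1 : Fin nh), pr.2))).rank = t * α)
    (c : Fin nh × Fin α → K)
    (hc : ∀ j, c j = ∑ i, f (y i) * algebraMap F K (G i j))
    (ytil : Fin nh × Fin α → K)
    (hytil : ∀ j, ytil j = ∑ i, algebraMap F K (G i j) * y i) :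
    (∀ j, c j = f (ytil j) ∧ ytil j ∈ Submodule.span F (Set.range y)) ∧
    (∀ Sb : Finset (Fin nh), Sb.Nonempty →
      Module.finrank F ↥(Submodule.span F (ytil '' {pr | pr.1 ∈ Sb})) =
        min Sb.card t * α) := by
  classical
  -- characteristic facts
  obtain ⟨p, hp⟩ := CharP.exists F
  haveI : CharP K p := charP_of_injective_algebraMap (algebraMap F K).injective p
  obtain ⟨m, hpm, hcard⟩ := FiniteField.card F p
  haveI : Fact p.Prime := ⟨hpm⟩
  have hfrob : ∀ (n : ℕ) (u : Fin (t * α) → K),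
      (∑ i, u i) ^ q ^ n = ∑ i, (u i) ^ q ^ n := by
    intro n u
    have hqp : q ^ n = p ^ ((m : ℕ) * n) := by rw [← hq, hcard, ← pow_mul]
    rw [hqp]
    have h2 := map_sum (iterateFrobenius K p ((m : ℕ) * n)) u Finset.univ
    simpa only [iterateFrobenius_def] using h2
  have hφpow : ∀ (n : ℕ) (g : F), (algebraMap F K g) ^ q ^ n = algebraMap F K g := by
    intro n g
    rw [← map_pow]
    congr 1
    induction n with
    | zero => simp
    | succ k ih => rw [pow_succ, pow_mul, ih, ← hq, FiniteField.pow_card]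
  -- part (a)
  have ha : ∀ j, c j = f (ytil j) := by
    intro j
    rw [hc, hf, hytil]
    have hsum : ∀ n : ℕ,
        (∑ i, algebraMap F K (G i j) * y i) ^ q ^ n
          = ∑ i, algebraMap F K (G i j) * (y i) ^ q ^ n := by
      intro n
      rw [hfrob n]
      exact Finset.sum_congr rfl fun i _ => by rw [mul_pow, hφpow]
    simp_rw [hsum, Finset.mul_sum]
    rw [Finset.sum_comm]
    refine Finset.sum_congr rfl fun i _ => ?_
    rw [hf, Finset.sum_mul]
    refine Finset.sum_congr rfl fun l _ => ?_
    ring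
  have hmem : ∀ j, ytil j ∈ Submodule.span F (Set.range y) := by
    intro j
    rw [hytil]
    refine Submodule.sum_mem _ fun i _ => ?_
    rw [← Algebra.smul_def]
    exact Submodule.smul_mem _ _ (Submodule.subset_span ⟨i, rfl⟩)
  refine ⟨fun j => ⟨ha j, hmem j⟩, ?_⟩
  -- part (b)
  intro Sb _
  set e : (Fin (t * α) → F) →ₗ[F] K := Fintype.linearCombination F y with he_def
  have he : Function.Injective e := by
    rw [← LinearMap.ker_eq_bot, Submodule.eq_bot_iff]
    intro v hv
    have hv0 : ∑ i, v i • y i = 0 := by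
      simpa [he_def, Fintype.linearCombination_apply] using hv
    have := Fintype.linearIndependent_iff.mp hy v hv0
    funext i
    exact this i
  have hyt : ∀ j, ytil j = e (fun i => G i j) := by
    intro j
    rw [hytil]
    simp [he_def, Fintype.linearCombination_apply, Algebra.smul_def]
  have himg : ytil '' {pr | pr.1 ∈ Sb}
      = e '' ((fun j (i : Fin (t * α)) => G i j) '' {pr | pr.1 ∈ Sb}) := by
    rw [Set.image_image]
    exact Set.image_congr fun j _ => hyt j
  rw [himg, Submodule.span_image]
  have hfr := (Submodule.equivMapOfInjective e he
    (Submodule.span F ((fun j (i : Fin (t * α)) => G i j) '' {pr | pr.1 ∈ Sb}))).symm.finrank_eq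
  rw [hfr]
  -- now a pure matrix-rank statement
  rcases le_total t Sb.card with h | h
  · -- min = t
    rw [min_eq_right h]
    obtain ⟨B, hBsub, hBcard⟩ := Finset.exists_subset_card_eq h
    have hrank := hG B hBcard
    rw [Matrix.rank_eq_finrank_span_cols] at hrank
    have hle : Submodule.span F
        (Set.range (G.submatrix id (fun pr : ↥B × Fin α => ((pr.1 : Fin nh), pr.2))).col)
        ≤ Submodule.span F ((fun j (i : Fin (t * α)) => G i j) '' {pr | pr.1 ∈ Sb}) := by
      apply Submodule.span_mono
      rintro _ ⟨pr, rfl⟩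
      exact ⟨((pr.1 : Fin nh), pr.2), hBsub pr.1.2, rfl⟩
    have h1 := Submodule.finrank_mono hle
    have h2 : Module.finrank F
        ↥(Submodule.span F ((fun j (i : Fin (t * α)) => G i j) '' {pr | pr.1 ∈ Sb}))
        ≤ t * α := by
      have := Submodule.finrank_le
        (Submodule.span F ((fun j (i : Fin (t * α)) => G i j) '' {pr | pr.1 ∈ Sb}))
      simpa [Module.finrank_pi] using this
    omega
  · -- min = Sb.card
    rw [min_eq_left h]
    obtain ⟨B, hBsub, -, hBcard⟩ :=
      Finset.exists_subsuperset_card_eq (Finset.subset_univ Sb) h (by simpa using htn)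
    have hrank := hG B hBcard
    rw [Matrix.rank_eq_finrank_span_cols] at hrank
    have hcardidx : Fintype.card (↥B × Fin α) = t * α := by simp [hBcard]
    have hli : LinearIndependent F
        (G.submatrix id (fun pr : ↥B × Fin α => ((pr.1 : Fin nh), pr.2))).col := by
      rw [linearIndependent_iff_card_eq_finrank_span, hcardidx]
      exact hrank.symm
    set g : {pr : Fin nh × Fin α // pr.1 ∈ Sb} → ↥B × Fin α :=
      fun j => (⟨j.1.1, hBsub j.2⟩, j.1.2) with hg_def
    have hginj : Function.Injective g := by
      intro x z hxz
      have h1 : x.1.1 = z.1.1 := congrArg (fun w : ↥B × Fin α => (w.1 : Fin nh)) hxz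
      have h2 : x.1.2 = z.1.2 := congrArg (fun w : ↥B × Fin α => w.2) hxz
      exact Subtype.ext (Prod.ext h1 h2)
    have hli2 := hli.comp g hginj
    have hcardS : Fintype.card {pr : Fin nh × Fin α // pr.1 ∈ Sb} = Sb.card * α := by
      have : {pr : Fin nh × Fin α // pr.1 ∈ Sb} ≃ ↥Sb × Fin α :=
        ⟨fun j => (⟨j.1.1, j.2⟩, j.1.2), fun p => ⟨((p.1 : Fin nh), p.2), p.1.2⟩,
          fun j => rfl, fun p => rfl⟩
      rw [Fintype.card_congr this]
      simp
    have hrange : (fun j (i : Fin (t * α)) => G i j) '' {pr | pr.1 ∈ Sb}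
        = Set.range ((G.submatrix id (fun pr : ↥B × Fin α => ((pr.1 : Fin nh), pr.2))).col ∘ g) := by
      rw [Set.image_eq_range]
      rfl
    rw [hrange]
    have hfin := finrank_span_eq_card hli2
    exact hfin.trans hcardS
end

section
/- Let K be a finite field with a subfield F of cardinality q and [K : F] = m; let g, r, α be positive integers and δ ≥ 2 an integer with m ≥ g·r·α; and let y_1, …, y_{grα} ∈ K be linearly independent over F. Let 𝔣 be the evaluation map of a linearized polynomial over K. For each group i ∈ {1, …, g}, let Ĝ_i ∈ F^{rα × (r+δ−1)α} be a generator matrix of an [r+δ−1, rα, δ, α]_q MDS array code, and let node u ∈ {1, …, r+δ−1} of group i store the u-th block of α entries of the vector (𝔣(y_{(i−1)rα+1}), …, 𝔣(y_{irα})) · Ĝ_i ∈ K^{(r+δ−1)α}. Then for any integers s_1, …, s_g with 0 ≤ s_i ≤ r+δ−1 and any choice of s_i nodes from group i for each i, every symbol stored on the chosen nodes equals 𝔣(z) for some point z in the F-linear span of {y_1, …, y_{grα}}, and the F-linear span of the evaluation points associated with all chosen nodes has dimension exactly ∑_{i=1}^{g} min{s_i, r}·α. -/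
/-- If a matrix has rank equal to its number of columns, the only vector it kills is zero. -/
lemma aux_mulVec_zero {F : Type} [Field F] {N : ℕ} {ι : Type} [Fintype ι]
    (M : Matrix (Fin N) ι F) (h : M.rank = Fintype.card ι)
    (x : ι → F) (hx : M.mulVec x = 0) : x = 0 := by
  have h1 := M.mulVecLin.finrank_range_add_finrank_ker
  rw [Matrix.rank] at h
  rw [h, Module.finrank_pi] at h1
  have h2 : Module.finrank F (LinearMap.ker M.mulVecLin) = 0 := by omega
  have h3 : LinearMap.ker M.mulVecLin = ⊥ := Submodule.finrank_eq_zero.mp h2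
  have : x ∈ LinearMap.ker M.mulVecLin := by
    simpa [Matrix.mulVecLin_apply] using hx
  rw [h3] at this
  simpa using this

/-- If a matrix has rank equal to its number of rows, every vector is in its column span. -/
lemma aux_mulVec_surj {F : Type} [Field F] {N : ℕ} {ι : Type} [Fintype ι]
    (M : Matrix (Fin N) ι F) (h : M.rank = N) (t : Fin N → F) :
    ∃ x : ι → F, M.mulVec x = t := by
  have : LinearMap.range M.mulVecLin = ⊤ := by
    apply Submodule.eq_top_of_finrank_eq
    rw [← Matrix.rank, h, Module.finrank_pi, Fintype.card_fin]
  obtain ⟨x, hx⟩ := (LinearMap.range_eq_top.mp this) t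
  exact ⟨x, by simpa [Matrix.mulVecLin_apply] using hx⟩

/-- A sum over a product type where the function vanishes off `D × univ`
equals the corresponding sum over the subtype product. -/
lemma aux_sum_support {M β γ : Type} [AddCommMonoid M] [Fintype β] [Fintype γ]
    [DecidableEq β] (D : Finset β) (g : β × γ → M) (hg : ∀ j, j.1 ∉ D → g j = 0) :
    ∑ j, g j = ∑ p : ↥D × γ, g (p.1.1, p.2) := by
  rw [Fintype.sum_prod_type, Fintype.sum_prod_type,
    Finset.sum_coe_sort D (fun u => ∑ v, g (u, v))]
  symm
  apply Finset.sum_subset (Finset.subset_univ D)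
  intro u _ hu
  exact Finset.sum_eq_zero fun v _ => hg (u, v) hu

/-- Linearity of the evaluation map of a linearized polynomial. -/
lemma aux_linearized {F K : Type} [Field F] [Field K] [Algebra F K] [Fintype F] [Fintype K]
    (q L : ℕ) (hq : Fintype.card F = q)
    {ι : Type} [Fintype ι]
    (y : ι → K) (b : ι → F)
    (a : Fin L → K)
    (f : K → K) (hf : ∀ z, f z = ∑ i : Fin L, a i * z ^ q ^ (i : ℕ)) :
    f (∑ w, algebraMap F K (b w) * y w) = ∑ w, f (y w) * algebraMap F K (b w) := by
  obtain ⟨p, hp⟩ : ∃ p, CharP F p := CharP.exists F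
  haveI := hp
  obtain ⟨n, hpp, hcard⟩ := FiniteField.card F p
  haveI : CharP K p := charP_of_injective_algebraMap (algebraMap F K).injective p
  haveI : ExpChar K p := ExpChar.prime hpp
  have key : ∀ (l : ℕ) (w : ι),
      (algebraMap F K (b w) * y w) ^ q ^ l = algebraMap F K (b w) * (y w) ^ q ^ l := by
    intro l w
    rw [mul_pow, ← map_pow]
    congr 2
    rw [← hq]
    exact FiniteField.pow_card_pow _ _
  rw [hf]
  have expand : ∀ l : ℕ, (∑ w, algebraMap F K (b w) * y w) ^ q ^ l
      = ∑ w, algebraMap F K (b w) * (y w) ^ q ^ l := by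
    intro l
    have hqpow : q ^ l = p ^ ((n : ℕ) * l) := by rw [pow_mul, ← hcard, hq]
    rw [hqpow, sum_pow_char_pow]
    simp only [← hqpow]
    exact Finset.sum_congr rfl fun w _ => key l w
  simp only [expand, Finset.mul_sum]
  rw [Finset.sum_comm]
  refine Finset.sum_congr rfl fun w _ => ?_
  rw [hf, Finset.sum_mul]
  refine Finset.sum_congr rfl fun l _ => ?_
  ring

/-- **Evaluation points of the grouped (Gabidulin + MDS array) locally repairable code
construction** (Lemma 6 of Rawat–Koyluoglu–Silberstein–Vishwanath).  `K` is a finite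
field with subfield `F` of cardinality `q` and `[K : F] = m ≥ g r α` (the subfield is
modelled by the extension `Algebra F K`); `f` is the evaluation map of a linearized
polynomial; the `g r α` points `y i w` are linearly independent over `F`; for each
group `i`, `G i` is a generator matrix of an `[r + δ - 1, r α, δ, α]_q` MDS array code
(every `r` blocks of columns give a full-rank `rα × rα` submatrix), and node `u` of
group `i` stores the `u`-th block of `(f (y i 1), …, f (y i (rα))) · G i`, i.e. the
symbols `c i (u, v)`.  Then every stored symbol satisfies `c i j = f (ỹ i j)` with
`ỹ i j` in the `F`-span of the `y`'s, and for any choice `A i` of nodes in each group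
the `F`-span of the evaluation points of the chosen nodes has dimension exactly
`∑ i, min{|A i|, r}·α`. -/
theorem grouped_lrc_evaluation_points
    {F K : Type} [Field F] [Field K] [Algebra F K] [Fintype F] [Fintype K]
    (q m g r α δ L : ℕ) (hq : Fintype.card F = q) (hm : Module.finrank F K = m)
    (hg : 0 < g) (hr : 0 < r) (hα : 0 < α) (hδ : 2 ≤ δ)
    (hmN : g * r * α ≤ m)
    (y : Fin g → Fin (r * α) → K)
    (hy : LinearIndependent F (fun pr : Fin g × Fin (r * α) => y pr.1 pr.2))
    (a : Fin L → K)
    (f : K → K) (hf : ∀ z, f z = ∑ i : Fin L, a i * z ^ q ^ (i : ℕ))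
    (G : Fin g → Matrix (Fin (r * α)) (Fin (r + δ - 1) × Fin α) F)
    (hG : ∀ i, ∀ B : Finset (Fin (r + δ - 1)), B.card = r →
      ((G i).submatrix id
        (fun pr : ↥B × Fin α => ((pr.1 : Fin (r + δ - 1)), pr.2))).rank = r * α)
    (c : Fin g → Fin (r + δ - 1) × Fin α → K)
    (hc : ∀ i j, c i j = ∑ w, f (y i w) * algebraMap F K (G i w j))
    (ytil : Fin g → Fin (r + δ - 1) × Fin α → K)
    (hytil : ∀ i j, ytil i j = ∑ w, algebraMap F K (G i w j) * y i w)
    (A : Fin g → Finset (Fin (r + δ - 1))) :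
    (∀ i j, c i j = f (ytil i j) ∧
      ytil i j ∈ Submodule.span F
        (Set.range fun pr : Fin g × Fin (r * α) => y pr.1 pr.2)) ∧
    Module.finrank F ↥(Submodule.span F
        {x : K | ∃ i : Fin g, ∃ j : Fin (r + δ - 1) × Fin α, j.1 ∈ A i ∧ x = ytil i j}) =
      ∑ i : Fin g, min (A i).card r * α := by
  classical
  constructor
  · intro i j
    constructor
    · rw [hc i j, hytil i j, aux_linearized q L hq (y i) (fun w => G i w j) a f hf]
    · rw [hytil i j]
      refine Submodule.sum_mem _ fun w _ => ?_
      rw [← Algebra.smul_def]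
      exact Submodule.smul_mem _ _ (Submodule.subset_span ⟨(i, w), rfl⟩)
  · -- dimension count
    -- choose B i ⊆ A i of cardinality min (A i).card r
    choose B hBsub hBcard using fun i =>
      Finset.exists_subset_card_eq (s := A i) (n := min (A i).card r) (min_le_left _ _)
    have hBle : ∀ i, (B i).card ≤ r := fun i => (hBcard i) ▸ min_le_right _ _
    -- choose C i ⊇ B i of cardinality r
    choose C hCsub hCcard using fun i =>
      Finset.exists_superset_card_eq (hBle i)
        (by simp only [Fintype.card_fin]; omega : r ≤ Fintype.card (Fin (r + δ - 1)))
    -- vanishing lemma from the MDS property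
    have hGzero : ∀ (i : Fin g) (lam : Fin (r + δ - 1) × Fin α → F),
        (∀ j, lam j ≠ 0 → j.1 ∈ C i) →
        (∀ w, ∑ j, lam j * G i w j = 0) → lam = 0 := by
      intro i lam hsupp hzero
      set M := (G i).submatrix id
        (fun pr : ↥(C i) × Fin α => ((pr.1 : Fin (r + δ - 1)), pr.2)) with hM
      have hrank : M.rank = Fintype.card (↥(C i) × Fin α) := by
        rw [hG i (C i) (hCcard i)]
        simp [Fintype.card_coe, hCcard i]
      have hmu : M.mulVec (fun p => lam (p.1.1, p.2)) = 0 := by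
        funext w
        have h1 : (M.mulVec fun p => lam (p.1.1, p.2)) w
            = ∑ p : ↥(C i) × Fin α, lam (p.1.1, p.2) * G i w (p.1.1, p.2) := by
          simp only [hM, Matrix.mulVec, dotProduct, Matrix.submatrix_apply, id_eq]
          exact Finset.sum_congr rfl fun p _ => mul_comm _ _
        rw [h1, ← aux_sum_support (C i) (fun j => lam j * G i w j)
          (fun j hj => by
            have h0 : lam j = 0 := by by_contra h0; exact hj (hsupp j h0)
            simp [h0]), hzero w]
        rfl
      have := aux_mulVec_zero M hrank _ hmu
      funext j
      by_cases hj : j.1 ∈ C i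
      · have := congrFun this (⟨j.1, hj⟩, j.2)
        simpa using this
      · by_contra hne
        exact hj (hsupp j hne)
    -- spanning lemma from the MDS property
    have hGspan : ∀ (i : Fin g) (D : Finset (Fin (r + δ - 1))), D.card = r →
        ∀ j : Fin (r + δ - 1) × Fin α,
        ∃ x : ↥D × Fin α → F, ∀ w, G i w j = ∑ p : ↥D × Fin α, x p * G i w (p.1.1, p.2) := by
      intro i D hD j
      obtain ⟨x, hx⟩ := aux_mulVec_surj
        ((G i).submatrix id (fun pr : ↥D × Fin α => ((pr.1 : Fin (r + δ - 1)), pr.2)))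
        (hG i D hD) (fun w => G i w j)
      refine ⟨x, fun w => ?_⟩
      have := congrFun hx w
      simp only [Matrix.mulVec, dotProduct, Matrix.submatrix_apply, id_eq] at this
      rw [← this]
      exact Finset.sum_congr rfl fun p _ => mul_comm _ _
    -- the candidate basis family
    set v : ((i : Fin g) × (↥(B i) × Fin α)) → K :=
      fun p => ytil p.1 (p.2.1.1, p.2.2) with hv
    have hvLI : LinearIndependent F v := by
      rw [Fintype.linearIndependent_iff]
      intro lam hlam
      set lam' : Fin g → Fin (r + δ - 1) × Fin α → F := fun i j =>
        if h : j.1 ∈ B i then lam ⟨i, ⟨⟨j.1, h⟩, j.2⟩⟩ else 0 with hlam'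
      have hcoef : ∀ (i : Fin g) (w : Fin (r * α)), ∑ j, lam' i j * G i w j = 0 := by
        have hyiff := Fintype.linearIndependent_iff.mp hy
        have hmain : ∀ pr : Fin g × Fin (r * α),
            (fun pr : Fin g × Fin (r * α) => ∑ j, lam' pr.1 j * G pr.1 pr.2 j) pr = 0 := by
          apply hyiff
          have hstep : ∀ i : Fin g, ∀ w : Fin (r * α),
              ∑ j, lam' i j * G i w j
                = ∑ p : ↥(B i) × Fin α, lam ⟨i, p⟩ * G i w (p.1.1, p.2) := by
            intro i w
            rw [aux_sum_support (B i) (fun j => lam' i j * G i w j)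
              (fun j hj => by simp [hlam', hj])]
            refine Finset.sum_congr rfl fun p _ => ?_
            simp [hlam', p.1.2]
          calc ∑ pr : Fin g × Fin (r * α),
                (∑ j, lam' pr.1 j * G pr.1 pr.2 j) • y pr.1 pr.2
              = ∑ i : Fin g, ∑ w : Fin (r * α),
                  (∑ p : ↥(B i) × Fin α, lam ⟨i, p⟩ * G i w (p.1.1, p.2)) • y i w := by
                rw [Fintype.sum_prod_type]
                exact Finset.sum_congr rfl fun i _ => Finset.sum_congr rfl fun w _ => by
                  rw [hstep i w]
            _ = ∑ i : Fin g, ∑ p : ↥(B i) × Fin α,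
                  lam ⟨i, p⟩ • ytil i (p.1.1, p.2) := by
                refine Finset.sum_congr rfl fun i _ => ?_
                simp only [Finset.sum_smul]
                rw [Finset.sum_comm]
                refine Finset.sum_congr rfl fun p _ => ?_
                rw [hytil, Finset.smul_sum]
                refine Finset.sum_congr rfl fun w _ => ?_
                rw [← Algebra.smul_def, smul_smul]
            _ = ∑ p : (i : Fin g) × (↥(B i) × Fin α), lam p • v p := by
                rw [← Finset.univ_sigma_univ, Finset.sum_sigma]
            _ = 0 := hlam
        intro i w; exact hmain (i, w)
      intro p
      have hz := hGzero p.1 (lam' p.1)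
        (fun j hj => by
          by_cases hjB : j.1 ∈ B p.1
          · exact hCsub p.1 hjB
          · exact absurd (by simp [hlam', hjB]) hj)
        (hcoef p.1)
      have := congrFun hz (p.2.1.1, p.2.2)
      simpa [hlam', p.2.1.2] using this
    -- span equality
    have hspan : Submodule.span F
        {x : K | ∃ i : Fin g, ∃ j : Fin (r + δ - 1) × Fin α, j.1 ∈ A i ∧ x = ytil i j}
        = Submodule.span F (Set.range v) := by
      apply le_antisymm
      · rw [Submodule.span_le]
        rintro x ⟨i, j, hjA, rfl⟩
        by_cases hcase : (A i).card ≤ r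
        · have hBA : B i = A i := Finset.eq_of_subset_of_card_le (hBsub i)
            (by rw [hBcard i]; omega)
          have hjB : j.1 ∈ B i := hBA ▸ hjA
          exact Submodule.subset_span ⟨⟨i, ⟨⟨j.1, hjB⟩, j.2⟩⟩, rfl⟩
        · have hBr : (B i).card = r := by rw [hBcard i]; omega
          obtain ⟨x, hx⟩ := hGspan i (B i) hBr j
          have hexp : ytil i j = ∑ p : ↥(B i) × Fin α, x p • ytil i (p.1.1, p.2) := by
            rw [hytil i j]
            calc ∑ w, algebraMap F K (G i w j) * y i w
                = ∑ w, ∑ p : ↥(B i) × Fin α,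
                    x p • (algebraMap F K (G i w (p.1.1, p.2)) * y i w) := by
                  refine Finset.sum_congr rfl fun w _ => ?_
                  rw [hx w, map_sum, Finset.sum_mul]
                  refine Finset.sum_congr rfl fun p _ => ?_
                  rw [map_mul, Algebra.smul_def, mul_assoc]
              _ = ∑ p : ↥(B i) × Fin α, x p • ytil i (p.1.1, p.2) := by
                  rw [Finset.sum_comm]
                  refine Finset.sum_congr rfl fun p _ => ?_
                  rw [hytil, Finset.smul_sum]
          rw [hexp]
          exact Submodule.sum_mem _ fun p _ =>
            Submodule.smul_mem _ _ (Submodule.subset_span ⟨⟨i, p⟩, rfl⟩)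
      · rw [Submodule.span_le]
        rintro x ⟨p, rfl⟩
        exact Submodule.subset_span ⟨p.1, (p.2.1.1, p.2.2), hBsub p.1 p.2.1.2, rfl⟩
    rw [hspan, finrank_span_eq_card hvLI]
    rw [Fintype.card_sigma]
    refine Finset.sum_congr rfl fun i _ => ?_
    rw [Fintype.card_prod, Fintype.card_coe, Fintype.card_fin, hBcard i]
end

section
/- Let r ≥ 1, δ ≥ 2, α ≥ 1 and n be integers with (r+δ−1) | n, and let 𝓜 be a positive multiple of α with 𝓜 ≤ n·r·α/(r+δ−1). Define d = n − 𝓜/α + 1 − (⌈𝓜/(r·α)⌉ − 1)·(δ−1), μ = ⌊(n − d + 1)/(r+δ−1)⌋, and h = n − d + 1 − (r+δ−1)·μ. Then μ·r·α + min{h, r}·α = 𝓜. (That is, a minimum-distance-optimal locally repairable code whose local groups are minimum storage regenerating codes attains, with equality, the file-size bound 𝓜 ≤ μ·r·α + min{h, r}·α for repair-bandwidth-efficient locally repairable codes.) -/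
/-- **Minimum-distance-optimal MSR-LRCs attain the file-size bound for
repair-bandwidth-efficient locally repairable codes with equality**
(Theorem 6 of Rawat–Koyluoglu–Silberstein–Vishwanath).  Let `(r + δ - 1) ∣ n`, let `𝓜`
be a positive multiple of `α` with `𝓜 ≤ n r α/(r + δ - 1)`, and set
`d = n - 𝓜/α + 1 - (⌈𝓜/(rα)⌉ - 1)(δ - 1)` (the optimal minimum distance),
`μ = ⌊(n - d + 1)/(r + δ - 1)⌋` and `h = n - d + 1 - (r + δ - 1)μ`.  Then
`μ r α + min{h, r} α = 𝓜`. -/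
theorem msr_lrc_file_size_optimal
    (r δ α n M : ℕ) (hr : 1 ≤ r) (hδ : 2 ≤ δ) (hα : 1 ≤ α)
    (hdvd : (r + δ - 1) ∣ n) (hM0 : 0 < M) (hαM : α ∣ M)
    (hMN : M * (r + δ - 1) ≤ n * r * α)
    (d μ h : ℤ)
    (hd : d = (n : ℤ) - (M / α : ℕ) + 1 - (⌈(M : ℚ) / (r * α)⌉ - 1) * ((δ : ℤ) - 1))
    (hμ : μ = ⌊((n : ℚ) - (d : ℚ) + 1) / ((r : ℚ) + (δ : ℚ) - 1)⌋)
    (hh : h = (n : ℤ) - d + 1 - ((r : ℤ) + (δ : ℤ) - 1) * μ) :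
    μ * r * α + min h (r : ℤ) * α = (M : ℤ) := by
  obtain ⟨m, hm⟩ := hαM
  subst hm
  have hα0 : (0:ℚ) < α := by exact_mod_cast hα
  have hr0 : (0:ℚ) < r := by exact_mod_cast hr
  have hm1 : 1 ≤ m := by
    rcases Nat.eq_zero_or_pos m with hm0 | hm0
    · simp [hm0] at hM0
    · exact hm0
  have hdiv : (α * m / α : ℕ) = m := Nat.mul_div_cancel_left m (by omega)
  set k : ℤ := ⌈(m : ℚ) / r⌉ with hkdef
  have hceil : ⌈((α * m : ℕ) : ℚ) / (r * α)⌉ = k := by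
    rw [hkdef]
    congr 1
    push_cast
    rw [mul_comm (r:ℚ) (α:ℚ), mul_div_mul_left _ _ (ne_of_gt hα0)]
  have hk1 : ((k - 1) * r : ℤ) < m := by
    have h1 : (k : ℚ) < (m : ℚ) / r + 1 := Int.ceil_lt_add_one _
    have h2 : ((k : ℚ) - 1) * r < m := by
      have := (lt_div_iff₀ hr0).mp (by linarith : (k : ℚ) - 1 < (m : ℚ) / r)
      linarith [this]
    exact_mod_cast h2
  have hk2 : (m : ℤ) ≤ k * r := by
    have h1 : (m : ℚ) / r ≤ k := Int.le_ceil _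
    have h2 : (m : ℚ) ≤ (k : ℚ) * r := by
      have := (div_le_iff₀ hr0).mp h1
      linarith [this]
    exact_mod_cast h2
  set S : ℤ := (r : ℤ) + δ - 1 with hSdef
  have hrZ : (1:ℤ) ≤ r := by exact_mod_cast hr
  have hδZ : (2:ℤ) ≤ δ := by exact_mod_cast hδ
  have hS : 0 < S := by omega
  set e : ℤ := (m : ℤ) - (k - 1) * r with hedef
  have he1 : 1 ≤ e := by omega
  have he2 : e ≤ (r : ℤ) := by
    have : k * r = (k - 1) * r + r := by ring
    omega
  have heS : e < S := by omega
  have hN : (n : ℤ) - d + 1 = (k - 1) * S + e := by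
    rw [hd, hceil, hdiv, hSdef, hedef]
    push_cast
    ring
  have hμ' : μ = k - 1 := by
    rw [hμ]
    have hcast : ((n : ℚ) - (d : ℚ) + 1) = ((k : ℚ) - 1) * S + e := by
      have := congrArg (fun x : ℤ => (x : ℚ)) hN
      push_cast at this
      linarith [this]
    have hSQ : (0:ℚ) < (S : ℚ) := by exact_mod_cast hS
    have hScast : ((r : ℚ) + (δ : ℚ) - 1) = (S : ℚ) := by
      rw [hSdef]; push_cast; ring
    rw [hcast, hScast]
    rw [Int.floor_eq_iff]
    constructor
    · rw [le_div_iff₀ hSQ]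
      have he1Q : (1:ℚ) ≤ (e : ℚ) := by exact_mod_cast he1
      push_cast
      nlinarith [he1Q, hSQ]
    · rw [div_lt_iff₀ hSQ]
      have heSQ : (e : ℚ) < (S : ℚ) := by exact_mod_cast heS
      push_cast
      nlinarith [heSQ, hSQ]
  have hh' : h = e := by
    rw [hh, hμ']
    linear_combination hN
  have hmin : min h (r : ℤ) = e := by
    rw [hh']
    exact min_eq_left he2
  rw [hμ', hmin]
  have : ((α * m : ℕ) : ℤ) = (α : ℤ) * m := by push_cast; ring
  rw [this, hedef]
  ring
end

section
/- Let f, r, e be random variables taking values in finite sets on a common probability space. If f and r are independent, H(e) ≤ H(r), and H(r | f, e) = 0, then I(f; e) = 0; that is, the mutual information leakage of f to the observation e is zero (equivalently, f and e are independent). -/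
/-! Finite-probability-space Shannon entropy framework. -/

/-- `p` is a probability mass function on the finite sample space `Ω`. -/
def IsPMF {Ω : Type} [Fintype Ω] (p : Ω → ℝ) : Prop :=
  (∀ ω, 0 ≤ p ω) ∧ ∑ ω, p ω = 1

/-- Probability that the random variable `X` takes the value `x`. -/
noncomputable def prEq {Ω : Type} [Fintype Ω] (p : Ω → ℝ) {S : Type} [DecidableEq S]
    (X : Ω → S) (x : S) : ℝ :=
  ∑ ω, if X ω = x then p ω else 0

/-- Shannon entropy (base `b`) of the random variable `X` on the finite probability
space `(Ω, p)`.  Terms with probability `0` vanish since `Real.logb b 0 = 0`. -/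
noncomputable def entH {Ω : Type} [Fintype Ω] (b : ℝ) (p : Ω → ℝ) {S : Type}
    [Fintype S] [DecidableEq S] (X : Ω → S) : ℝ :=
  -∑ x, prEq p X x * Real.logb b (prEq p X x)

/-- Conditional entropy `H(X | Y) = H(X, Y) - H(Y)`. -/
noncomputable def condH {Ω : Type} [Fintype Ω] (b : ℝ) (p : Ω → ℝ) {S T : Type}
    [Fintype S] [DecidableEq S] [Fintype T] [DecidableEq T]
    (X : Ω → S) (Y : Ω → T) : ℝ :=
  entH b p (fun ω => (X ω, Y ω)) - entH b p Y

/-- Mutual information `I(X; Y) = H(X) + H(Y) - H(X, Y)`. -/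
noncomputable def mutI {Ω : Type} [Fintype Ω] (b : ℝ) (p : Ω → ℝ) {S T : Type}
    [Fintype S] [DecidableEq S] [Fintype T] [DecidableEq T]
    (X : Ω → S) (Y : Ω → T) : ℝ :=
  entH b p X + entH b p Y - entH b p (fun ω => (X ω, Y ω))

/-- Independence of two random variables on a finite probability space. -/
def IndepRV {Ω : Type} [Fintype Ω] (p : Ω → ℝ) {S T : Type} [DecidableEq S] [DecidableEq T]
    (X : Ω → S) (Y : Ω → T) : Prop :=
  ∀ x y, prEq p (fun ω => (X ω, Y ω)) (x, y) = prEq p X x * prEq p Y y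

set_option linter.unusedSectionVars false

section Aux
variable {Ω : Type} [Fintype Ω] {S T : Type} [Fintype S] [DecidableEq S]
  [Fintype T] [DecidableEq T]

lemma prEq_nonneg (p : Ω → ℝ) (h0 : ∀ ω, 0 ≤ p ω) (X : Ω → S) (x : S) :
    0 ≤ prEq p X x :=
  Finset.sum_nonneg fun ω _ => by split <;> simp [h0 ω]

lemma prEq_sum_one (p : Ω → ℝ) (hp : IsPMF p) (X : Ω → S) :
    ∑ x, prEq p X x = 1 := by
  unfold prEq
  rw [Finset.sum_comm]
  simpa using hp.2

lemma prEq_comp (p : Ω → ℝ) (X : Ω → S) (g : S → T) (t : T) :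
    prEq p (fun ω => g (X ω)) t = ∑ x, if g x = t then prEq p X x else 0 := by
  unfold prEq
  have h1 : ∀ ω, (if g (X ω) = t then p ω else 0)
      = ∑ x, if g x = t then (if X ω = x then p ω else 0) else 0 := by
    intro ω
    rw [Finset.sum_eq_single (X ω)]
    · simp
    · intro x _ hx
      simp [if_neg (Ne.symm hx)]
    · simp
  simp_rw [h1]
  rw [Finset.sum_comm]
  refine Finset.sum_congr rfl fun x _ => ?_
  by_cases h : g x = t <;> simp [h]

lemma prEq_fst (p : Ω → ℝ) (f : Ω → S) (e : Ω → T) (x : S) :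
    prEq p f x = ∑ y, prEq p (fun ω => (f ω, e ω)) (x, y) := by
  unfold prEq
  rw [Finset.sum_comm]
  refine Finset.sum_congr rfl fun ω _ => ?_
  rw [Finset.sum_eq_single (e ω)]
  · simp [Prod.ext_iff]
  · intro y _ hy
    simp [Prod.ext_iff, Ne.symm hy]
  · simp

lemma prEq_snd (p : Ω → ℝ) (f : Ω → S) (e : Ω → T) (y : T) :
    prEq p e y = ∑ x, prEq p (fun ω => (f ω, e ω)) (x, y) := by
  unfold prEq
  rw [Finset.sum_comm]
  refine Finset.sum_congr rfl fun ω _ => ?_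
  rw [Finset.sum_eq_single (f ω)]
  · simp [Prod.ext_iff]
  · intro x _ hx
    simp [Prod.ext_iff, Ne.symm hx]
  · simp

lemma prEq_pair_le_left (p : Ω → ℝ) (h0 : ∀ ω, 0 ≤ p ω) (f : Ω → S) (e : Ω → T)
    (x : S) (y : T) : prEq p (fun ω => (f ω, e ω)) (x, y) ≤ prEq p f x := by
  refine Finset.sum_le_sum fun ω _ => ?_
  dsimp only
  by_cases h : (f ω, e ω) = (x, y)
  · rw [if_pos h, if_pos (congrArg Prod.fst h)]
  · rw [if_neg h]
    split <;> simp [h0 ω]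

lemma prEq_pair_le_right (p : Ω → ℝ) (h0 : ∀ ω, 0 ≤ p ω) (f : Ω → S) (e : Ω → T)
    (x : S) (y : T) : prEq p (fun ω => (f ω, e ω)) (x, y) ≤ prEq p e y := by
  refine Finset.sum_le_sum fun ω _ => ?_
  dsimp only
  by_cases h : (f ω, e ω) = (x, y)
  · rw [if_pos h, if_pos (congrArg Prod.snd h)]
  · rw [if_neg h]
    split <;> simp [h0 ω]

/-- Data processing: a function of a random variable has no more entropy. -/
lemma entH_comp_le (b : ℝ) (hb : 1 < b) (p : Ω → ℝ) (hp : IsPMF p)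
    (X : Ω → S) (g : S → T) :
    entH b p (fun ω => g (X ω)) ≤ entH b p X := by
  unfold entH
  rw [neg_le_neg_iff]
  set q : S → ℝ := prEq p X with hqdef
  set Q : T → ℝ := prEq p (fun ω => g (X ω)) with hQdef
  have hq0 : ∀ x, 0 ≤ q x := fun x => prEq_nonneg p hp.1 X x
  have hQeq : ∀ t, Q t = ∑ x, if g x = t then q x else 0 := fun t => prEq_comp p X g t
  -- regroup
  have hgroup : ∑ t, Q t * Real.logb b (Q t)
      = ∑ x, q x * Real.logb b (Q (g x)) := by
    have : ∀ x, q x * Real.logb b (Q (g x))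
        = ∑ t, if g x = t then q x * Real.logb b (Q t) else 0 := by
      intro x
      rw [Finset.sum_eq_single (g x)]
      · rw [if_pos rfl]
      · intro t _ ht
        exact if_neg fun h => ht h.symm
      · intro h
        exact absurd (Finset.mem_univ _) h
    simp_rw [this]
    rw [Finset.sum_comm]
    refine Finset.sum_congr rfl fun t _ => ?_
    rw [hQeq t, Finset.sum_mul]
    refine Finset.sum_congr rfl fun x _ => ?_
    split <;> simp
  rw [hgroup]
  refine Finset.sum_le_sum fun x _ => ?_
  rcases eq_or_lt_of_le (hq0 x) with h | h
  · simp [← h]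
  · have hle : q x ≤ Q (g x) := by
      rw [hQeq (g x)]
      have := Finset.single_le_sum (f := fun y => if g y = g x then q y else 0)
        (fun i _ => by split <;> simp [hq0 i]) (Finset.mem_univ x)
      simpa using this
    exact mul_le_mul_of_nonneg_left (Real.logb_le_logb_of_le hb h hle) (hq0 x)

/-- Subadditivity. -/
lemma entH_pair_le (b : ℝ) (hb : 1 < b) (p : Ω → ℝ) (hp : IsPMF p)
    (f : Ω → S) (e : Ω → T) :
    entH b p (fun ω => (f ω, e ω)) ≤ entH b p f + entH b p e := by
  have hlb : 0 < Real.log b := Real.log_pos hb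
  set q : S × T → ℝ := prEq p (fun ω => (f ω, e ω)) with hqdef
  have hq0 : ∀ z, 0 ≤ q z := fun z => prEq_nonneg p hp.1 _ z
  have hx0 : ∀ x, 0 ≤ prEq p f x := fun x => prEq_nonneg p hp.1 f x
  have hy0 : ∀ y, 0 ≤ prEq p e y := fun y => prEq_nonneg p hp.1 e y
  have hf : entH b p f = -∑ x, ∑ y, q (x, y) * Real.logb b (prEq p f x) := by
    unfold entH
    congr 1
    refine Finset.sum_congr rfl fun x _ => ?_
    rw [prEq_fst p f e x, Finset.sum_mul]
  have he : entH b p e = -∑ x, ∑ y, q (x, y) * Real.logb b (prEq p e y) := by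
    unfold entH
    congr 1
    rw [Finset.sum_comm]
    refine Finset.sum_congr rfl fun y _ => ?_
    rw [prEq_snd p f e y, Finset.sum_mul]
  have hpair : entH b p (fun ω => (f ω, e ω))
      = -∑ x, ∑ y, q (x, y) * Real.logb b (q (x, y)) := by
    unfold entH
    rw [Fintype.sum_prod_type]
  rw [hf, he, hpair]
  have key : ∀ x y, (q (x, y) - prEq p f x * prEq p e y) / Real.log b
      ≤ q (x, y) * Real.logb b (q (x, y))
        - q (x, y) * Real.logb b (prEq p f x)
        - q (x, y) * Real.logb b (prEq p e y) := by
    intro x y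
    rcases eq_or_lt_of_le (hq0 (x, y)) with h | h
    · rw [← h]
      simp only [zero_mul, sub_zero, zero_sub, neg_div]
      have : 0 ≤ prEq p f x * prEq p e y / Real.log b :=
        div_nonneg (mul_nonneg (hx0 x) (hy0 y)) hlb.le
      linarith
    · have hcx : 0 < prEq p f x := lt_of_lt_of_le h (prEq_pair_le_left p hp.1 f e x y)
      have hcy : 0 < prEq p e y := lt_of_lt_of_le h (prEq_pair_le_right p hp.1 f e x y)
      set a := q (x, y)
      set c := prEq p f x
      set d := prEq p e y
      have hz : (0:ℝ) < c * d / a := by positivity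
      have hlog : Real.log (c * d / a) ≤ c * d / a - 1 := Real.log_le_sub_one_of_pos hz
      have hsplit : Real.log (c * d / a) = Real.log c + Real.log d - Real.log a := by
        rw [Real.log_div (by positivity) (ne_of_gt h), Real.log_mul (ne_of_gt hcx) (ne_of_gt hcy)]
      rw [hsplit] at hlog
      have hstep : a - c * d ≤ a * Real.log a - a * Real.log c - a * Real.log d := by
        have hmul := mul_le_mul_of_nonneg_left hlog h.le
        have hrhs : a * (c * d / a - 1) = c * d - a := by
          field_simp
        rw [hrhs] at hmul
        nlinarith [hmul]
      simp only [Real.logb, div_le_iff₀ hlb]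
      calc a - c * d ≤ a * Real.log a - a * Real.log c - a * Real.log d := hstep
        _ = (a * (Real.log a / Real.log b) - a * (Real.log c / Real.log b)
              - a * (Real.log d / Real.log b)) * Real.log b := by
            field_simp
            try ring
  have h1 : ∑ x, ∑ y, q (x, y) = 1 := by
    rw [← Fintype.sum_prod_type]
    exact prEq_sum_one p hp _
  have h2 : ∑ x, ∑ y, prEq p f x * prEq p e y = 1 := by
    simp_rw [← Finset.mul_sum, prEq_sum_one p hp e, mul_one]
    exact prEq_sum_one p hp f
  have h0 : ∑ x, ∑ y, (q (x, y) - prEq p f x * prEq p e y) / Real.log b = 0 := by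
    simp only [sub_div, Finset.sum_sub_distrib, ← Finset.sum_div]
    rw [h1, h2]
    simp
  have main : (0:ℝ) ≤ ∑ x, ∑ y, (q (x, y) * Real.logb b (q (x, y))
        - q (x, y) * Real.logb b (prEq p f x)
        - q (x, y) * Real.logb b (prEq p e y)) := by
    rw [← h0]
    exact Finset.sum_le_sum fun x _ => Finset.sum_le_sum fun y _ => key x y
  simp only [Finset.sum_sub_distrib] at main
  linarith

/-- Additivity for independent random variables. -/
lemma entH_pair_indep (b : ℝ) (p : Ω → ℝ) (hp : IsPMF p)
    (f : Ω → S) (e : Ω → T)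
    (hi : ∀ x y, prEq p (fun ω => (f ω, e ω)) (x, y) = prEq p f x * prEq p e y) :
    entH b p (fun ω => (f ω, e ω)) = entH b p f + entH b p e := by
  have hx0 : ∀ x, 0 ≤ prEq p f x := fun x => prEq_nonneg p hp.1 f x
  have hy0 : ∀ y, 0 ≤ prEq p e y := fun y => prEq_nonneg p hp.1 e y
  unfold entH
  rw [Fintype.sum_prod_type]
  have hterm : ∀ (x : S) (y : T),
      prEq p (fun ω => (f ω, e ω)) (x, y)
        * Real.logb b (prEq p (fun ω => (f ω, e ω)) (x, y))
      = prEq p e y * (prEq p f x * Real.logb b (prEq p f x))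
        + prEq p f x * (prEq p e y * Real.logb b (prEq p e y)) := by
    intro x y
    rw [hi x y]
    rcases eq_or_lt_of_le (hx0 x) with hx | hx
    · simp [← hx]
    rcases eq_or_lt_of_le (hy0 y) with hy | hy
    · simp [← hy]
    rw [Real.logb_mul (ne_of_gt hx) (ne_of_gt hy)]
    ring
  simp_rw [hterm]
  have hinner : ∀ x : S, ∑ y, (prEq p e y * (prEq p f x * Real.logb b (prEq p f x))
      + prEq p f x * (prEq p e y * Real.logb b (prEq p e y)))
      = prEq p f x * Real.logb b (prEq p f x)
        + prEq p f x * (∑ y, prEq p e y * Real.logb b (prEq p e y)) := by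
    intro x
    rw [Finset.sum_add_distrib, ← Finset.sum_mul, ← Finset.mul_sum,
      prEq_sum_one p hp e, one_mul]
  simp_rw [hinner]
  rw [Finset.sum_add_distrib, ← Finset.sum_mul, prEq_sum_one p hp f, one_mul]
  ring

end Aux

/-- **Secrecy Lemma.**  If the information `f` and the random bits `r` are independent,
`H(e) ≤ H(r)`, and `H(r | f, e) = 0`, then the leakage to the eavesdropper is zero:
`I(f; e) = 0`. -/
theorem secrecy_lemma
    {Ω F R E : Type} [Fintype Ω] [Fintype F] [DecidableEq F]
    [Fintype R] [DecidableEq R] [Fintype E] [DecidableEq E]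
    (b : ℝ) (hb : 1 < b) (p : Ω → ℝ) (hp : IsPMF p)
    (f : Ω → F) (r : Ω → R) (e : Ω → E)
    (hindep : IndepRV p f r)
    (hHe : entH b p e ≤ entH b p r)
    (hHr : condH b p r (fun ω => (f ω, e ω)) = 0) :
    mutI b p f e = 0 := by
  have h1 : entH b p (fun ω => (f ω, r ω)) = entH b p f + entH b p r :=
    entH_pair_indep b p hp f r hindep
  have h2 : entH b p (fun ω => (f ω, r ω)) ≤ entH b p (fun ω => (r ω, (f ω, e ω))) :=
    entH_comp_le b hb p hp (fun ω => (r ω, (f ω, e ω))) (fun z => (z.2.1, z.1))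
  have h3 : entH b p (fun ω => (r ω, (f ω, e ω))) = entH b p (fun ω => (f ω, e ω)) := by
    unfold condH at hHr
    linarith
  have h4 : entH b p (fun ω => (f ω, e ω)) ≤ entH b p f + entH b p e :=
    entH_pair_le b hb p hp f e
  unfold mutI
  linarith
end

section
/- Let b > 1, let α > 0 be a real number, and let k, ℓ₁, ℓ₂ ≥ 0 be integers with ℓ₁ + ℓ₂ < k. Let f; x_1, …, x_{k−ℓ₂} (contents of original nodes); x'_1, …, x'_{ℓ₂} (contents of the ℓ₂ repaired nodes); d_1, …, d_{ℓ₂} (the data downloaded during the corresponding node repairs); and d_{i,j} for ℓ₁+1 ≤ i ≤ k−ℓ₂ and 1 ≤ j ≤ ℓ₂ (the part of d_j sent by node i) be random variables taking values in finite sets on a common probability space. Assume: (i) security: I(f; (x_1, …, x_{ℓ₁}, d_1, …, d_{ℓ₂})) = 0; (ii) each repaired node is determined by its downloads: H(x'_j | d_j) = 0 for every j; (iii) each per-node download is a function of the total download: H(d_{i,j} | d_j) = 0 for all i, j; (iv) reconstruction from any k nodes: H(f | x_1, …, x_{k−ℓ₂}, x'_1, …, x'_{ℓ₂}) = 0; (v)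 per-node storage: H(x_i) ≤ α for every ℓ₁+1 ≤ i ≤ k−ℓ₂. Then H(f) ≤ ∑_{i=ℓ₁+1}^{k−ℓ₂} ( α − I(x_i; (d_{i,1}, …, d_{i,ℓ₂})) ). -/
namespace MSR
set_option linter.unusedSectionVars false

variable {Ω : Type} [Fintype Ω] {b : ℝ} {p : Ω → ℝ}
variable {S T U V : Type} [Fintype S] [DecidableEq S] [Fintype T] [DecidableEq T]
  [Fintype U] [DecidableEq U] [Fintype V] [DecidableEq V]

lemma prEq_nonneg (hp : IsPMF p) (X : Ω → S) (x : S) : 0 ≤ prEq p X x :=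
  Finset.sum_nonneg fun ω _ => by split <;> simp [hp.1 ω]

lemma sum_prEq (hp : IsPMF p) (X : Ω → S) : ∑ x, prEq p X x = 1 := by
  unfold prEq
  rw [Finset.sum_comm]
  calc ∑ ω, ∑ x, (if X ω = x then p ω else 0) = ∑ ω : Ω, p ω := by
        refine Finset.sum_congr rfl fun ω _ => ?_
        simp [Finset.sum_ite_eq]
    _ = 1 := hp.2

lemma prEq_comp (X : Ω → S) (g : S → T) (t : T) :
    prEq p (fun ω => g (X ω)) t = ∑ x, if g x = t then prEq p X x else 0 := by
  unfold prEq
  have h1 : ∀ x : S, (if g x = t then ∑ ω, (if X ω = x then p ω else 0) else 0)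
      = ∑ ω, (if X ω = x then (if g x = t then p ω else 0) else 0) := by
    intro x
    by_cases h : g x = t <;> simp [h]
  rw [Finset.sum_congr rfl fun x _ => h1 x, Finset.sum_comm]
  refine Finset.sum_congr rfl fun ω _ => ?_
  rw [Finset.sum_ite_eq]
  simp

lemma prEq_comp_inj (X : Ω → S) {g : S → T} (hg : Function.Injective g) (x : S) :
    prEq p (fun ω => g (X ω)) (g x) = prEq p X x := by
  rw [prEq_comp]
  have : ∀ y : S, (if g y = g x then prEq p X y else 0) = (if x = y then prEq p X y else 0) := by
    intro y
    by_cases h : y = x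
    · simp [h]
    · have hne : g y ≠ g x := fun hh => h (hg hh)
      simp [hne, Ne.symm h]
  rw [Finset.sum_congr rfl fun y _ => this y, Finset.sum_ite_eq]
  simp

lemma prEq_comp_zero (X : Ω → S) (g : S → T) {t : T} (ht : t ∉ Set.range g) :
    prEq p (fun ω => g (X ω)) t = 0 := by
  rw [prEq_comp]
  refine Finset.sum_eq_zero fun x _ => ?_
  have : g x ≠ t := fun h => ht ⟨x, h⟩
  simp [this]

lemma entH_comp_inj (X : Ω → S) (g : S → T) (hg : Function.Injective g) :
    entH b p (fun ω => g (X ω)) = entH b p X := by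
  unfold entH
  congr 1
  rw [← Finset.sum_subset (Finset.subset_univ (Finset.univ.image g))]
  · rw [Finset.sum_image (fun x _ y _ h => hg h)]
    exact Finset.sum_congr rfl fun x _ => by rw [prEq_comp_inj X hg]
  · intro t _ ht
    have ht' : t ∉ Set.range g := by
      intro ⟨x, hx⟩
      exact ht (Finset.mem_image.2 ⟨x, Finset.mem_univ x, hx⟩)
    rw [prEq_comp_zero X g ht']
    simp

lemma prEq_fst_marginal (X : Ω → S) (Z : Ω → T) (z : T) :
    ∑ x, prEq p (fun ω => (X ω, Z ω)) (x, z) = prEq p Z z := by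
  unfold prEq
  rw [Finset.sum_comm]
  refine Finset.sum_congr rfl fun ω _ => ?_
  simp only [Prod.mk.injEq]
  by_cases h : Z ω = z
  · simp [h, Finset.sum_ite_eq]
  · simp [h]

lemma prEq_pair_le_snd (hp : IsPMF p) (X : Ω → S) (Z : Ω → T) (x : S) (z : T) :
    prEq p (fun ω => (X ω, Z ω)) (x, z) ≤ prEq p Z z := by
  refine Finset.sum_le_sum fun ω _ => ?_
  rcases eq_or_ne (X ω, Z ω) (x, z) with h | h
  · rw [if_pos h]
    have hz : Z ω = z := (Prod.ext_iff.mp h).2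
    simp [hz]
  · rw [if_neg h]
    split <;> simp [hp.1 ω]

lemma prEq_pair_le_fst (hp : IsPMF p) (X : Ω → S) (Z : Ω → T) (x : S) (z : T) :
    prEq p (fun ω => (X ω, Z ω)) (x, z) ≤ prEq p X x := by
  have e : prEq p (fun ω => (X ω, Z ω)) (x, z) = prEq p (fun ω => (Z ω, X ω)) (z, x) := by
    unfold prEq
    refine Finset.sum_congr rfl fun ω _ => ?_
    simp [Prod.ext_iff, and_comm]
  rw [e]; exact prEq_pair_le_snd hp Z X z x

lemma sum_pair_weight (X : Ω → S) (Z : Ω → V) (h : V → ℝ) :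
    ∑ z : S × V, prEq p (fun ω => (X ω, Z ω)) z * h z.2 = ∑ v, prEq p Z v * h v := by
  rw [Fintype.sum_prod_type_right]
  refine Finset.sum_congr rfl fun v _ => ?_
  dsimp only
  rw [← Finset.sum_mul, prEq_fst_marginal]

lemma entH_le_entH_pair (hb : 1 < b) (hp : IsPMF p) (X : Ω → S) (Y : Ω → T) :
    entH b p Y ≤ entH b p (fun ω => (X ω, Y ω)) := by
  unfold entH
  rw [neg_le_neg_iff]
  rw [← sum_pair_weight X Y (fun y => Real.logb b (prEq p Y y))]
  refine Finset.sum_le_sum fun z _ => ?_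
  obtain ⟨zx, zy⟩ := z
  rcases eq_or_lt_of_le (prEq_nonneg hp (fun ω => (X ω, Y ω)) (zx, zy)) with h0 | hpos
  · rw [← h0]; simp
  · refine mul_le_mul_of_nonneg_left ?_ hpos.le
    exact Real.logb_le_logb_of_le hb hpos (prEq_pair_le_snd hp X Y zx zy)

lemma gibbs {I : Type} [Fintype I] (hb : 1 < b) (P Q : I → ℝ)
    (hP : ∀ i, 0 ≤ P i) (hQ : ∀ i, 0 ≤ Q i)
    (hPQ : ∀ i, P i ≠ 0 → Q i ≠ 0) (hsum : ∑ i, Q i ≤ ∑ i, P i) :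
    ∑ i, P i * Real.logb b (Q i) ≤ ∑ i, P i * Real.logb b (P i) := by
  have hlb : 0 < Real.log b := Real.log_pos hb
  have key : ∀ i, P i * Real.logb b (Q i) ≤ P i * Real.logb b (P i) - (P i - Q i) / Real.log b := by
    intro i
    rcases eq_or_lt_of_le (hP i) with h0 | hpos
    · rw [← h0]
      simp only [zero_mul, zero_sub, neg_div, sub_neg_eq_add, zero_add]
      exact div_nonneg (hQ i) hlb.le
    · have hQpos : 0 < Q i := lt_of_le_of_ne (hQ i) (Ne.symm (hPQ i (ne_of_gt hpos)))
      have h1 : P i * (Real.log (Q i) - Real.log (P i)) ≤ Q i - P i := by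
        have hl := Real.log_le_sub_one_of_pos (div_pos hQpos hpos)
        rw [Real.log_div hQpos.ne' hpos.ne'] at hl
        have h2 := mul_le_mul_of_nonneg_left hl hpos.le
        have h3 : P i * (Q i / P i - 1) = Q i - P i := by field_simp
        linarith [h2, h3.symm.le]
      rw [Real.logb, Real.logb, ← mul_div_assoc, ← mul_div_assoc, div_sub_div_same,
        div_le_div_iff_of_pos_right hlb]
      linarith
  calc ∑ i, P i * Real.logb b (Q i)
      ≤ ∑ i, (P i * Real.logb b (P i) - (P i - Q i) / Real.log b) := Finset.sum_le_sum fun i _ => key i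
    _ = ∑ i, P i * Real.logb b (P i) - (∑ i, P i - ∑ i, Q i) / Real.log b := by
        rw [Finset.sum_sub_distrib, ← Finset.sum_div, Finset.sum_sub_distrib]
    _ ≤ ∑ i, P i * Real.logb b (P i) := by
        have : 0 ≤ (∑ i, P i - ∑ i, Q i) / Real.log b := by
          apply div_nonneg (by linarith) hlb.le
        linarith


/-- Reindexing a triple. -/
lemma prEq_rot (A : Ω → S) (B : Ω → T) (C : Ω → U) (z : S × T × U) :
    prEq p (fun ω => (A ω, B ω, C ω)) z = prEq p (fun ω => (B ω, A ω, C ω)) (z.2.1, z.1, z.2.2) := by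
  obtain ⟨a, bb, c⟩ := z
  unfold prEq
  refine Finset.sum_congr rfl fun ω _ => ?_
  simp only [Prod.mk.injEq]
  exact if_congr (by tauto) rfl rfl

/-- Submodularity: conditioning on more reduces entropy. -/
lemma condH_pair_right_le (hb : 1 < b) (hp : IsPMF p) (A : Ω → S) (B : Ω → T) (C : Ω → U) :
    condH b p A (fun ω => (B ω, C ω)) ≤ condH b p A C := by
  classical
  have hlb : 0 < Real.log b := Real.log_pos hb
  have hP3nn : ∀ z : S × T × U, 0 ≤ prEq p (fun ω => (A ω, B ω, C ω)) z :=
    fun z => prEq_nonneg hp _ z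
  have hP3BC : ∀ z : S × T × U,
      prEq p (fun ω => (A ω, B ω, C ω)) z ≤ prEq p (fun ω => (B ω, C ω)) z.2 := by
    rintro ⟨a, bc⟩
    exact prEq_pair_le_snd hp A (fun ω => (B ω, C ω)) a bc
  have hP3AC : ∀ z : S × T × U,
      prEq p (fun ω => (A ω, B ω, C ω)) z ≤ prEq p (fun ω => (A ω, C ω)) (z.1, z.2.2) := by
    intro z
    rw [prEq_rot A B C z]
    exact prEq_pair_le_snd hp B (fun ω => (A ω, C ω)) z.2.1 (z.1, z.2.2)
  have hBCC : ∀ y : T × U, prEq p (fun ω => (B ω, C ω)) y ≤ prEq p C y.2 := by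
    rintro ⟨t, u⟩; exact prEq_pair_le_snd hp B C t u
  have hQnn : ∀ z : S × T × U, 0 ≤ (if prEq p C z.2.2 = 0 then 0
      else prEq p (fun ω => (A ω, C ω)) (z.1, z.2.2) * prEq p (fun ω => (B ω, C ω)) z.2
        / prEq p C z.2.2) := by
    intro z
    split
    · exact le_refl 0
    · have n1 := prEq_nonneg hp (fun ω => (A ω, C ω)) (z.1, z.2.2)
      have n2 := prEq_nonneg hp (fun ω => (B ω, C ω)) z.2
      have n3 := prEq_nonneg hp C z.2.2
      positivity
  have hPQ : ∀ z : S × T × U, prEq p (fun ω => (A ω, B ω, C ω)) z ≠ 0 →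
      (if prEq p C z.2.2 = 0 then 0
        else prEq p (fun ω => (A ω, C ω)) (z.1, z.2.2) * prEq p (fun ω => (B ω, C ω)) z.2
          / prEq p C z.2.2) ≠ 0 := by
    intro z hz
    have hzpos : 0 < prEq p (fun ω => (A ω, B ω, C ω)) z := (hP3nn z).lt_of_ne (Ne.symm hz)
    have h1 : 0 < prEq p (fun ω => (A ω, C ω)) (z.1, z.2.2) := lt_of_lt_of_le hzpos (hP3AC z)
    have h2 : 0 < prEq p (fun ω => (B ω, C ω)) z.2 := lt_of_lt_of_le hzpos (hP3BC z)
    have h3 : 0 < prEq p C z.2.2 := lt_of_lt_of_le h2 (hBCC z.2)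
    rw [if_neg h3.ne']
    positivity
  have hsumQ : ∑ z : S × T × U, (if prEq p C z.2.2 = 0 then 0
      else prEq p (fun ω => (A ω, C ω)) (z.1, z.2.2) * prEq p (fun ω => (B ω, C ω)) z.2
        / prEq p C z.2.2) ≤ ∑ z : S × T × U, prEq p (fun ω => (A ω, B ω, C ω)) z := by
    rw [sum_prEq hp]
    have inner : ∀ c : U, (∑ s : S, ∑ t : T, (if prEq p C c = 0 then 0
        else prEq p (fun ω => (A ω, C ω)) (s, c) * prEq p (fun ω => (B ω, C ω)) (t, c)
          / prEq p C c)) ≤ prEq p C c := by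
      intro c
      by_cases hc : prEq p C c = 0
      · simp [hc]
      · simp only [if_neg hc]
        have step : ∀ s : S, (∑ t : T, prEq p (fun ω => (A ω, C ω)) (s, c)
            * prEq p (fun ω => (B ω, C ω)) (t, c) / prEq p C c)
            = prEq p (fun ω => (A ω, C ω)) (s, c) := by
          intro s
          rw [← Finset.sum_div, ← Finset.mul_sum, prEq_fst_marginal B C c,
            mul_div_assoc, div_self hc, mul_one]
        rw [Finset.sum_congr rfl fun s _ => step s, prEq_fst_marginal A C c]
    calc ∑ z : S × T × U, (if prEq p C z.2.2 = 0 then 0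
          else prEq p (fun ω => (A ω, C ω)) (z.1, z.2.2) * prEq p (fun ω => (B ω, C ω)) z.2
            / prEq p C z.2.2)
        = ∑ s : S, ∑ t : T, ∑ c : U, (if prEq p C c = 0 then 0
            else prEq p (fun ω => (A ω, C ω)) (s, c) * prEq p (fun ω => (B ω, C ω)) (t, c)
              / prEq p C c) := by
          simp only [Fintype.sum_prod_type]
      _ = ∑ c : U, ∑ s : S, ∑ t : T, (if prEq p C c = 0 then 0
            else prEq p (fun ω => (A ω, C ω)) (s, c) * prEq p (fun ω => (B ω, C ω)) (t, c)
              / prEq p C c) := by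
          rw [Finset.sum_congr rfl fun s (_ : s ∈ Finset.univ) => Finset.sum_comm]
          exact Finset.sum_comm
      _ ≤ ∑ c : U, prEq p C c := Finset.sum_le_sum fun c _ => inner c
      _ = 1 := sum_prEq hp C
  have gib := gibbs (I := S × T × U) hb (prEq p (fun ω => (A ω, B ω, C ω)))
    (fun z => if prEq p C z.2.2 = 0 then 0
      else prEq p (fun ω => (A ω, C ω)) (z.1, z.2.2) * prEq p (fun ω => (B ω, C ω)) z.2
        / prEq p C z.2.2) hP3nn hQnn hPQ hsumQ
  beta_reduce at gib
  have hexp : ∀ z : S × T × U,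
      prEq p (fun ω => (A ω, B ω, C ω)) z * Real.logb b (if prEq p C z.2.2 = 0 then 0
        else prEq p (fun ω => (A ω, C ω)) (z.1, z.2.2) * prEq p (fun ω => (B ω, C ω)) z.2
          / prEq p C z.2.2)
      = prEq p (fun ω => (A ω, B ω, C ω)) z
          * Real.logb b (prEq p (fun ω => (A ω, C ω)) (z.1, z.2.2))
        + prEq p (fun ω => (A ω, B ω, C ω)) z
          * Real.logb b (prEq p (fun ω => (B ω, C ω)) z.2)
        - prEq p (fun ω => (A ω, B ω, C ω)) z * Real.logb b (prEq p C z.2.2) := by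
    intro z
    by_cases hz : prEq p (fun ω => (A ω, B ω, C ω)) z = 0
    · rw [hz]; ring
    · have hzpos : 0 < prEq p (fun ω => (A ω, B ω, C ω)) z := (hP3nn z).lt_of_ne (Ne.symm hz)
      have h1 : 0 < prEq p (fun ω => (A ω, C ω)) (z.1, z.2.2) := lt_of_lt_of_le hzpos (hP3AC z)
      have h2 : 0 < prEq p (fun ω => (B ω, C ω)) z.2 := lt_of_lt_of_le hzpos (hP3BC z)
      have h3 : 0 < prEq p C z.2.2 := lt_of_lt_of_le h2 (hBCC z.2)
      rw [if_neg h3.ne', Real.logb_div (mul_pos h1 h2).ne' h3.ne', Real.logb_mul h1.ne' h2.ne']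
      ring
  have hsplit := Finset.sum_congr rfl fun (z : S × T × U) (_ : z ∈ Finset.univ) => hexp z
  rw [Finset.sum_sub_distrib, Finset.sum_add_distrib] at hsplit
  have m1 : ∑ z : S × T × U, prEq p (fun ω => (A ω, B ω, C ω)) z
        * Real.logb b (prEq p (fun ω => (B ω, C ω)) z.2)
      = ∑ y : T × U, prEq p (fun ω => (B ω, C ω)) y
        * Real.logb b (prEq p (fun ω => (B ω, C ω)) y) :=
    sum_pair_weight A (fun ω => (B ω, C ω))
      (fun y => Real.logb b (prEq p (fun ω => (B ω, C ω)) y))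
  have m3 : ∑ z : S × T × U, prEq p (fun ω => (A ω, B ω, C ω)) z
        * Real.logb b (prEq p C z.2.2)
      = ∑ c : U, prEq p C c * Real.logb b (prEq p C c) := by
    have s1 := sum_pair_weight (p := p) A (fun ω => (B ω, C ω))
      (fun y => Real.logb b (prEq p C y.2))
    have s2 := sum_pair_weight (p := p) B C (fun c => Real.logb b (prEq p C c))
    rw [s1, s2]
  have m2 : ∑ z : S × T × U, prEq p (fun ω => (A ω, B ω, C ω)) z
        * Real.logb b (prEq p (fun ω => (A ω, C ω)) (z.1, z.2.2))
      = ∑ y : S × U, prEq p (fun ω => (A ω, C ω)) y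
        * Real.logb b (prEq p (fun ω => (A ω, C ω)) y) := by
    calc ∑ z : S × T × U, prEq p (fun ω => (A ω, B ω, C ω)) z
          * Real.logb b (prEq p (fun ω => (A ω, C ω)) (z.1, z.2.2))
        = ∑ z : S × T × U, prEq p (fun ω => (B ω, A ω, C ω)) (z.2.1, z.1, z.2.2)
          * Real.logb b (prEq p (fun ω => (A ω, C ω)) (z.1, z.2.2)) := by
          exact Finset.sum_congr rfl fun z _ => by rw [prEq_rot A B C z]
      _ = ∑ w : T × S × U, prEq p (fun ω => (B ω, A ω, C ω)) w
          * Real.logb b (prEq p (fun ω => (A ω, C ω)) w.2) := by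
          simpa using Equiv.sum_comp
            (⟨fun z => (z.2.1, z.1, z.2.2), fun w => (w.2.1, w.1, w.2.2),
              fun z => rfl, fun w => rfl⟩ : (S × T × U) ≃ (T × S × U))
            (fun w => prEq p (fun ω => (B ω, A ω, C ω)) w
              * Real.logb b (prEq p (fun ω => (A ω, C ω)) w.2))
      _ = ∑ y : S × U, prEq p (fun ω => (A ω, C ω)) y
          * Real.logb b (prEq p (fun ω => (A ω, C ω)) y) :=
          sum_pair_weight B (fun ω => (A ω, C ω))
            (fun y => Real.logb b (prEq p (fun ω => (A ω, C ω)) y))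
  show (-∑ z : S × T × U, prEq p (fun ω => (A ω, B ω, C ω)) z
        * Real.logb b (prEq p (fun ω => (A ω, B ω, C ω)) z))
      - (-∑ y : T × U, prEq p (fun ω => (B ω, C ω)) y
        * Real.logb b (prEq p (fun ω => (B ω, C ω)) y))
      ≤ (-∑ y : S × U, prEq p (fun ω => (A ω, C ω)) y
        * Real.logb b (prEq p (fun ω => (A ω, C ω)) y))
      - (-∑ c : U, prEq p C c * Real.logb b (prEq p C c))
  linarith [gib, hsplit, m1, m2, m3]


lemma condH_nonneg (hb : 1 < b) (hp : IsPMF p) (X : Ω → S) (Y : Ω → T) :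
    0 ≤ condH b p X Y :=
  sub_nonneg.2 (entH_le_entH_pair hb hp X Y)

lemma condH_right_inj (A : Ω → S) (Y : Ω → T) (σ : T → U) (hσ : Function.Injective σ) :
    condH b p A (fun ω => σ (Y ω)) = condH b p A Y := by
  unfold condH
  beta_reduce
  have h1 : entH b p (fun ω => (A ω, σ (Y ω))) = entH b p (fun ω => (A ω, Y ω)) := by
    have hinj : Function.Injective (fun z : S × T => (z.1, σ z.2)) := by
      intro a c h
      simp only [Prod.ext_iff] at h ⊢
      exact ⟨h.1, hσ h.2⟩
    exact entH_comp_inj (fun ω => (A ω, Y ω)) (fun z : S × T => (z.1, σ z.2)) hinj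
  have h2 : entH b p (fun ω => σ (Y ω)) = entH b p Y := entH_comp_inj Y σ hσ
  rw [h1, h2]

lemma condH_left_inj (Z : Ω → S) (Y : Ω → T) (g : S → U) (hg : Function.Injective g) :
    condH b p (fun ω => g (Z ω)) Y = condH b p Z Y := by
  unfold condH
  beta_reduce
  congr 1
  have hinj : Function.Injective (fun z : S × T => (g z.1, z.2)) := by
    intro a c h
    simp only [Prod.ext_iff] at h ⊢
    exact ⟨hg h.1, h.2⟩
  exact entH_comp_inj (fun ω => (Z ω, Y ω)) (fun z : S × T => (g z.1, z.2)) hinj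

lemma condH_chain (A : Ω → S) (B : Ω → T) (C : Ω → U) :
    condH b p (fun ω => (A ω, B ω)) C
      = condH b p A (fun ω => (B ω, C ω)) + condH b p B C := by
  unfold condH
  beta_reduce
  have h : entH b p (fun ω => ((A ω, B ω), C ω)) = entH b p (fun ω => (A ω, B ω, C ω)) := by
    have hinj : Function.Injective (fun z : S × T × U => ((z.1, z.2.1), z.2.2)) := by
      intro a c h
      simp only [Prod.ext_iff] at h ⊢
      tauto
    exact entH_comp_inj (fun ω => (A ω, B ω, C ω)) (fun z : S × T × U => ((z.1, z.2.1), z.2.2)) hinj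
  rw [h]
  ring

lemma condH_mono_left (hb : 1 < b) (hp : IsPMF p) (A : Ω → S) (B : Ω → T) (C : Ω → U) :
    condH b p A C ≤ condH b p (fun ω => (A ω, B ω)) C := by
  unfold condH
  beta_reduce
  have h1 : entH b p (fun ω => (A ω, C ω)) ≤ entH b p (fun ω => (B ω, A ω, C ω)) :=
    entH_le_entH_pair hb hp B (fun ω => (A ω, C ω))
  have h2 : entH b p (fun ω => (B ω, A ω, C ω)) = entH b p (fun ω => ((A ω, B ω), C ω)) := by
    have hinj : Function.Injective (fun z : T × S × U => ((z.2.1, z.1), z.2.2)) := by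
      intro a c h
      simp only [Prod.ext_iff] at h ⊢
      tauto
    exact (entH_comp_inj (fun ω => (B ω, A ω, C ω)) (fun z : T × S × U => ((z.2.1, z.1), z.2.2)) hinj).symm
  linarith

lemma condH_pair_right_le_fst (hb : 1 < b) (hp : IsPMF p) (A : Ω → S) (B : Ω → T) (C : Ω → U) :
    condH b p A (fun ω => (B ω, C ω)) ≤ condH b p A B := by
  have hswap : Function.Injective (fun y : U × T => ((y.2, y.1) : T × U)) := by
    intro a c h
    simp only [Prod.ext_iff] at h ⊢
    tauto
  have h : condH b p A (fun ω => (B ω, C ω)) = condH b p A (fun ω => (C ω, B ω)) :=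
    condH_right_inj A (fun ω => (C ω, B ω)) (fun y : U × T => (y.2, y.1)) hswap
  rw [h]
  exact condH_pair_right_le hb hp A C B

lemma condH_comp_right_le (hb : 1 < b) (hp : IsPMF p) (A : Ω → S) (Y : Ω → T) (g : T → U) :
    condH b p A Y ≤ condH b p A (fun ω => g (Y ω)) := by
  have h : condH b p A (fun ω => (g (Y ω), Y ω)) = condH b p A Y :=
    condH_right_inj A Y (fun y => (g y, y)) (fun a c h => (Prod.ext_iff.mp h).2)
  rw [← h]
  exact condH_pair_right_le_fst hb hp A (fun ω => g (Y ω)) Y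

lemma condH_comp_left_zero (Y : Ω → T) (g : T → U) :
    condH b p (fun ω => g (Y ω)) Y = 0 := by
  unfold condH
  beta_reduce
  rw [entH_comp_inj Y (fun y => (g y, y)) (fun a c h => (Prod.ext_iff.mp h).2), sub_self]

lemma condH_subadd (hb : 1 < b) (hp : IsPMF p) (A : Ω → S) (B : Ω → T) (C : Ω → U) :
    condH b p (fun ω => (A ω, B ω)) C ≤ condH b p A C + condH b p B C := by
  rw [condH_chain A B C]
  have := condH_pair_right_le hb hp A B C
  linarith

lemma condH_eq_entH_sub_mutI (X : Ω → S) (Y : Ω → T) :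
    condH b p X Y = entH b p X - mutI b p X Y := by
  unfold condH mutI
  ring

lemma condH_ext_zero (hb : 1 < b) (hp : IsPMF p) (A : Ω → S) (Cc : Ω → T) (B : Ω → U)
    (h : condH b p Cc B = 0) :
    condH b p A (fun ω => (Cc ω, B ω)) = condH b p A B := by
  have h1 := condH_chain (p := p) (b := b) A Cc B
  have h2 := condH_chain (p := p) (b := b) Cc A B
  have hswap : Function.Injective (fun z : T × S => ((z.2, z.1) : S × T)) := by
    intro a c hh
    simp only [Prod.ext_iff] at hh ⊢
    tauto
  have h3 : condH b p (fun ω => (A ω, Cc ω)) B = condH b p (fun ω => (Cc ω, A ω)) B :=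
    condH_left_inj (fun ω => (Cc ω, A ω)) B (fun z : T × S => ((z.2, z.1) : S × T)) hswap
  have h4 : condH b p Cc (fun ω => (A ω, B ω)) = 0 := by
    have hle := condH_pair_right_le hb hp Cc A B
    have hge := condH_nonneg hb hp Cc (fun ω => (A ω, B ω))
    linarith
  linarith

lemma condH_tuple_le (hb : 1 < b) (hp : IsPMF p) {n : ℕ} {Tf : Fin n → Type}
    [∀ j, Fintype (Tf j)] [∀ j, DecidableEq (Tf j)] (W : ∀ j, Ω → Tf j) (Y : Ω → V) :
    condH b p (fun ω => fun j => W j ω) Y ≤ ∑ j, condH b p (W j) Y := by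
  induction n with
  | zero =>
    have hfeq : (fun ω => fun j : Fin 0 => W j ω)
        = (fun ω : Ω => (fun _ : V => (fun j : Fin 0 => (Fin.elim0 j : Tf j))) (Y ω)) := by
      funext ω
      exact funext fun j => Fin.elim0 j
    rw [hfeq, condH_comp_left_zero Y (fun _ : V => (fun j : Fin 0 => (Fin.elim0 j : Tf j)))]
    simp
  | succ n ih =>
    have hfeq : (fun ω => fun j : Fin (n + 1) => W j ω)
        = (fun ω => (fun z : (Tf 0) × (∀ j : Fin n, Tf j.succ) => Fin.cons z.1 z.2)
            ((W 0 ω, fun j : Fin n => W j.succ ω))) := by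
      funext ω
      exact (Fin.cons_self_tail (fun j => W j ω)).symm
    rw [hfeq]
    have hinj : Function.Injective
        (fun z : (Tf 0) × (∀ j : Fin n, Tf j.succ) => Fin.cons z.1 z.2) := by
      intro a c h
      obtain ⟨h1, h2⟩ := Fin.cons_injective2 h
      exact Prod.ext h1 h2
    rw [condH_left_inj (fun ω => ((W 0 ω, fun j : Fin n => W j.succ ω))) Y
      (fun z : (Tf 0) × (∀ j : Fin n, Tf j.succ) => Fin.cons z.1 z.2) hinj]
    calc condH b p (fun ω => ((W 0 ω, fun j : Fin n => W j.succ ω))) Y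
        ≤ condH b p (W 0) Y + condH b p (fun ω => fun j : Fin n => W j.succ ω) Y :=
          condH_subadd hb hp _ _ _
      _ ≤ condH b p (W 0) Y + ∑ j : Fin n, condH b p (W j.succ) Y := by
          have := ih (fun j => W j.succ)
          linarith
      _ = ∑ j : Fin (n + 1), condH b p (W j) Y :=
          (Fin.sum_univ_succ (f := fun j : Fin (n + 1) => condH b p (W j) Y)).symm

end MSR

/-- **Upper bound on the secure file size at the MSR point**
(Theorem 1 of Rawat–Koyluoglu–Silberstein–Vishwanath).
Nodes are indexed `1, …, k - ℓ₂` (original nodes `x`), repaired nodes and their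
downloads are indexed `1, …, ℓ₂` (`x'` and `d`), and `dd i j` is the part of the
download `d j` sent by node `i`.  Under the security, repair, reconstruction and
storage hypotheses, the securely stored file size satisfies
`H(f) ≤ ∑_{i=ℓ₁+1}^{k-ℓ₂} (α - I(x_i; (d_{i,1}, …, d_{i,ℓ₂})))`. -/
theorem msr_secrecy_capacity_bound
    {Ω : Type} [Fintype Ω] (b : ℝ) (hb : 1 < b) (p : Ω → ℝ) (hp : IsPMF p)
    (α : ℝ) (hα : 0 < α) (k l₁ l₂ : ℕ) (hk : l₁ + l₂ < k)
    {F : Type} [Fintype F] [DecidableEq F] (f : Ω → F)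
    {X : ℕ → Type} [∀ i, Fintype (X i)] [∀ i, DecidableEq (X i)] (x : ∀ i, Ω → X i)
    {X' : ℕ → Type} [∀ j, Fintype (X' j)] [∀ j, DecidableEq (X' j)] (x' : ∀ j, Ω → X' j)
    {D : ℕ → Type} [∀ j, Fintype (D j)] [∀ j, DecidableEq (D j)] (d : ∀ j, Ω → D j)
    {DD : ℕ → ℕ → Type} [∀ i j, Fintype (DD i j)] [∀ i j, DecidableEq (DD i j)]
    (dd : ∀ i j, Ω → DD i j)
    -- (i) security against the (ℓ₁, ℓ₂)-eavesdropper
    (hsec : mutI b p f (fun ω =>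
      ((fun i : Fin l₁ => x (i.val + 1) ω), (fun j : Fin l₂ => d (j.val + 1) ω))) = 0)
    -- (ii) each repaired node is a function of its downloads
    (hrep : ∀ j, 1 ≤ j → j ≤ l₂ → condH b p (x' j) (d j) = 0)
    -- (iii) each per-node download is a function of the total download
    (hdown : ∀ i j, l₁ + 1 ≤ i → i ≤ k - l₂ → 1 ≤ j → j ≤ l₂ →
      condH b p (dd i j) (d j) = 0)
    -- (iv) reconstruction from the k nodes x_1, …, x_{k-ℓ₂}, x'_1, …, x'_{ℓ₂}
    (hrec : condH b p f (fun ω =>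
      ((fun i : Fin (k - l₂) => x (i.val + 1) ω), (fun j : Fin l₂ => x' (j.val + 1) ω))) = 0)
    -- (v) per-node storage bound
    (hstore : ∀ i, l₁ + 1 ≤ i → i ≤ k - l₂ → entH b p (x i) ≤ α) :
    entH b p f ≤ ∑ i ∈ Finset.Ioc l₁ (k - l₂),
      (α - mutI b p (x i) (fun ω => fun j : Fin l₂ => dd i (j.val + 1) ω)) := by
  classical
  open MSR in
  have hl1n : l₁ ≤ k - l₂ := by omega
  -- Step 1: security means H(f) = H(f | E)
  have step1 : entH b p f = condH b p f (fun ω => ((fun i : Fin l₁ => x (i.val + 1) ω), (fun j : Fin l₂ => d (j.val + 1) ω))) := by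
    have h := condH_eq_entH_sub_mutI (b := b) (p := p) f (fun ω => ((fun i : Fin l₁ => x (i.val + 1) ω), (fun j : Fin l₂ => d (j.val + 1) ω)))
    rw [h, hsec, sub_zero]
  -- eavesdropped originals carry no extra information
  have hxE : ∀ i ∈ Finset.Ioc 0 l₁, condH b p (x i) (fun ω => ((fun i : Fin l₁ => x (i.val + 1) ω), (fun j : Fin l₂ => d (j.val + 1) ω))) = 0 := by
    intro i hi
    rw [Finset.mem_Ioc] at hi
    obtain ⟨m, rfl⟩ : ∃ m, i = m + 1 := ⟨i - 1, by omega⟩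
    have hm : m < l₁ := by omega
    have hle : condH b p (x (m + 1)) (fun ω => ((fun i : Fin l₁ => x (i.val + 1) ω), (fun j : Fin l₂ => d (j.val + 1) ω))) ≤ condH b p (x (m + 1)) (x (m + 1)) :=
      condH_comp_right_le hb hp (x (m + 1)) (fun ω => ((fun i : Fin l₁ => x (i.val + 1) ω), (fun j : Fin l₂ => d (j.val + 1) ω))) (fun e => e.1 ⟨m, hm⟩)
    have hzero : condH b p (x (m + 1)) (x (m + 1)) = 0 :=
      condH_comp_left_zero (x (m + 1)) id
    have hnn := condH_nonneg hb hp (x (m + 1)) (fun ω => ((fun i : Fin l₁ => x (i.val + 1) ω), (fun j : Fin l₂ => d (j.val + 1) ω)))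
    linarith
  -- Step 6: the middle nodes
  have step6 : ∀ i ∈ Finset.Ioc l₁ (k - l₂),
      condH b p (x i) (fun ω => ((fun i : Fin l₁ => x (i.val + 1) ω), (fun j : Fin l₂ => d (j.val + 1) ω)))
        ≤ α - mutI b p (x i) (fun ω => fun j : Fin l₂ => dd i (j.val + 1) ω) := by
    intro i hi
    rw [Finset.mem_Ioc] at hi
    have hddE : ∀ j : Fin l₂, condH b p (dd i (j.val + 1)) (fun ω => ((fun i : Fin l₁ => x (i.val + 1) ω), (fun j : Fin l₂ => d (j.val + 1) ω))) = 0 := by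
      intro j
      have h1 : condH b p (dd i (j.val + 1)) (fun ω => ((fun i : Fin l₁ => x (i.val + 1) ω), (fun j : Fin l₂ => d (j.val + 1) ω)))
          ≤ condH b p (dd i (j.val + 1)) (d (j.val + 1)) :=
        condH_comp_right_le hb hp (dd i (j.val + 1)) (fun ω => ((fun i : Fin l₁ => x (i.val + 1) ω), (fun j : Fin l₂ => d (j.val + 1) ω))) (fun e => e.2 j)
      have h2 := hdown i (j.val + 1) (by omega) (by omega) (by omega) (by omega)
      have h3 := condH_nonneg hb hp (dd i (j.val + 1)) (fun ω => ((fun i : Fin l₁ => x (i.val + 1) ω), (fun j : Fin l₂ => d (j.val + 1) ω)))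
      linarith
    have hDDE : condH b p (fun ω => fun j : Fin l₂ => dd i (j.val + 1) ω) (fun ω => ((fun i : Fin l₁ => x (i.val + 1) ω), (fun j : Fin l₂ => d (j.val + 1) ω))) = 0 := by
      have h1 := condH_tuple_le hb hp (fun j : Fin l₂ => dd i (j.val + 1)) (fun ω => ((fun i : Fin l₁ => x (i.val + 1) ω), (fun j : Fin l₂ => d (j.val + 1) ω)))
      have h2 : ∑ j : Fin l₂, condH b p (dd i (j.val + 1)) (fun ω => ((fun i : Fin l₁ => x (i.val + 1) ω), (fun j : Fin l₂ => d (j.val + 1) ω))) = 0 :=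
        Finset.sum_eq_zero fun j _ => hddE j
      have h3 := condH_nonneg hb hp (fun ω => fun j : Fin l₂ => dd i (j.val + 1) ω) (fun ω => ((fun i : Fin l₁ => x (i.val + 1) ω), (fun j : Fin l₂ => d (j.val + 1) ω)))
      linarith
    have hext : condH b p (x i)
          (fun ω => ((fun j : Fin l₂ => dd i (j.val + 1) ω), (fun ω => ((fun i : Fin l₁ => x (i.val + 1) ω), (fun j : Fin l₂ => d (j.val + 1) ω))) ω))
        = condH b p (x i) (fun ω => ((fun i : Fin l₁ => x (i.val + 1) ω), (fun j : Fin l₂ => d (j.val + 1) ω))) :=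
      condH_ext_zero hb hp (x i) (fun ω => fun j : Fin l₂ => dd i (j.val + 1) ω) (fun ω => ((fun i : Fin l₁ => x (i.val + 1) ω), (fun j : Fin l₂ => d (j.val + 1) ω))) hDDE
    have hdrop : condH b p (x i)
          (fun ω => ((fun j : Fin l₂ => dd i (j.val + 1) ω), (fun ω => ((fun i : Fin l₁ => x (i.val + 1) ω), (fun j : Fin l₂ => d (j.val + 1) ω))) ω))
        ≤ condH b p (x i) (fun ω => fun j : Fin l₂ => dd i (j.val + 1) ω) :=
      condH_pair_right_le_fst hb hp (x i)
        (fun ω => fun j : Fin l₂ => dd i (j.val + 1) ω) (fun ω => ((fun i : Fin l₁ => x (i.val + 1) ω), (fun j : Fin l₂ => d (j.val + 1) ω)))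
    have hmut : condH b p (x i) (fun ω => fun j : Fin l₂ => dd i (j.val + 1) ω)
        = entH b p (x i) - mutI b p (x i) (fun ω => fun j : Fin l₂ => dd i (j.val + 1) ω) :=
      condH_eq_entH_sub_mutI (x i) (fun ω => fun j : Fin l₂ => dd i (j.val + 1) ω)
    have hst := hstore i (by omega) hi.2
    linarith
  -- Step 3: reconstruction makes H(f | M, E) = 0
  have hx1ME : ∀ j : Fin l₂, condH b p (x' (j.val + 1)) (fun ω => ((fun i : Fin (k - l₂) => x (i.val + 1) ω), ((fun i : Fin l₁ => x (i.val + 1) ω), (fun j : Fin l₂ => d (j.val + 1) ω)))) = 0 := by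
    intro j
    have h1 : condH b p (x' (j.val + 1)) (fun ω => ((fun i : Fin (k - l₂) => x (i.val + 1) ω), ((fun i : Fin l₁ => x (i.val + 1) ω), (fun j : Fin l₂ => d (j.val + 1) ω))))
        ≤ condH b p (x' (j.val + 1)) (d (j.val + 1)) :=
      condH_comp_right_le hb hp (x' (j.val + 1)) (fun ω => ((fun i : Fin (k - l₂) => x (i.val + 1) ω), ((fun i : Fin l₁ => x (i.val + 1) ω), (fun j : Fin l₂ => d (j.val + 1) ω)))) (fun z => z.2.2 j)
    have h2 := hrep (j.val + 1) (by omega) (by omega)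
    have h3 := condH_nonneg hb hp (x' (j.val + 1)) (fun ω => ((fun i : Fin (k - l₂) => x (i.val + 1) ω), ((fun i : Fin l₁ => x (i.val + 1) ω), (fun j : Fin l₂ => d (j.val + 1) ω))))
    linarith
  have hRtME : condH b p (fun ω => (fun j : Fin l₂ => x' (j.val + 1) ω)) (fun ω => ((fun i : Fin (k - l₂) => x (i.val + 1) ω), ((fun i : Fin l₁ => x (i.val + 1) ω), (fun j : Fin l₂ => d (j.val + 1) ω)))) = 0 := by
    have h1 := condH_tuple_le hb hp (fun j : Fin l₂ => x' (j.val + 1)) (fun ω => ((fun i : Fin (k - l₂) => x (i.val + 1) ω), ((fun i : Fin l₁ => x (i.val + 1) ω), (fun j : Fin l₂ => d (j.val + 1) ω))))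
    have h2 : ∑ j : Fin l₂, condH b p (x' (j.val + 1)) (fun ω => ((fun i : Fin (k - l₂) => x (i.val + 1) ω), ((fun i : Fin l₁ => x (i.val + 1) ω), (fun j : Fin l₂ => d (j.val + 1) ω)))) = 0 :=
      Finset.sum_eq_zero fun j _ => hx1ME j
    have h3 := condH_nonneg hb hp (fun ω => (fun j : Fin l₂ => x' (j.val + 1) ω)) (fun ω => ((fun i : Fin (k - l₂) => x (i.val + 1) ω), ((fun i : Fin l₁ => x (i.val + 1) ω), (fun j : Fin l₂ => d (j.val + 1) ω))))
    linarith
  have hfME : condH b p f (fun ω => ((fun i : Fin (k - l₂) => x (i.val + 1) ω), ((fun i : Fin l₁ => x (i.val + 1) ω), (fun j : Fin l₂ => d (j.val + 1) ω)))) = 0 := by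
    have hext : condH b p f (fun ω => ((fun j : Fin l₂ => x' (j.val + 1) ω), ((fun i : Fin (k - l₂) => x (i.val + 1) ω), ((fun i : Fin l₁ => x (i.val + 1) ω), (fun j : Fin l₂ => d (j.val + 1) ω))))) = condH b p f (fun ω => ((fun i : Fin (k - l₂) => x (i.val + 1) ω), ((fun i : Fin l₁ => x (i.val + 1) ω), (fun j : Fin l₂ => d (j.val + 1) ω)))) :=
      condH_ext_zero hb hp f (fun ω => (fun j : Fin l₂ => x' (j.val + 1) ω)) (fun ω => ((fun i : Fin (k - l₂) => x (i.val + 1) ω), ((fun i : Fin l₁ => x (i.val + 1) ω), (fun j : Fin l₂ => d (j.val + 1) ω)))) hRtME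
    have hle : condH b p f (fun ω => ((fun j : Fin l₂ => x' (j.val + 1) ω), ((fun i : Fin (k - l₂) => x (i.val + 1) ω), ((fun i : Fin l₁ => x (i.val + 1) ω), (fun j : Fin l₂ => d (j.val + 1) ω)))))
        ≤ condH b p f (fun ω =>
          ((fun i : Fin (k - l₂) => x (i.val + 1) ω), (fun j : Fin l₂ => x' (j.val + 1) ω))) :=
      condH_comp_right_le hb hp f (fun ω => ((fun j : Fin l₂ => x' (j.val + 1) ω), ((fun i : Fin (k - l₂) => x (i.val + 1) ω), ((fun i : Fin l₁ => x (i.val + 1) ω), (fun j : Fin l₂ => d (j.val + 1) ω))))) (fun z => (z.2.1, z.1))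
    rw [hrec] at hle
    have h3 := condH_nonneg hb hp f (fun ω => ((fun i : Fin (k - l₂) => x (i.val + 1) ω), ((fun i : Fin l₁ => x (i.val + 1) ω), (fun j : Fin l₂ => d (j.val + 1) ω))))
    linarith
  -- Step 2: expand by the middle nodes
  have step2 : condH b p f (fun ω => ((fun i : Fin l₁ => x (i.val + 1) ω), (fun j : Fin l₂ => d (j.val + 1) ω))) ≤ condH b p (fun ω => (fun i : Fin (k - l₂) => x (i.val + 1) ω)) (fun ω => ((fun i : Fin l₁ => x (i.val + 1) ω), (fun j : Fin l₂ => d (j.val + 1) ω))) + condH b p f (fun ω => ((fun i : Fin (k - l₂) => x (i.val + 1) ω), ((fun i : Fin l₁ => x (i.val + 1) ω), (fun j : Fin l₂ => d (j.val + 1) ω)))) := by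
    have h1 : condH b p f (fun ω => ((fun i : Fin l₁ => x (i.val + 1) ω), (fun j : Fin l₂ => d (j.val + 1) ω))) ≤ condH b p (fun ω => (f ω, (fun ω => (fun i : Fin (k - l₂) => x (i.val + 1) ω)) ω)) (fun ω => ((fun i : Fin l₁ => x (i.val + 1) ω), (fun j : Fin l₂ => d (j.val + 1) ω))) :=
      condH_mono_left hb hp f (fun ω => (fun i : Fin (k - l₂) => x (i.val + 1) ω)) (fun ω => ((fun i : Fin l₁ => x (i.val + 1) ω), (fun j : Fin l₂ => d (j.val + 1) ω)))
    have h2 := condH_chain (b := b) (p := p) f (fun ω => (fun i : Fin (k - l₂) => x (i.val + 1) ω)) (fun ω => ((fun i : Fin l₁ => x (i.val + 1) ω), (fun j : Fin l₂ => d (j.val + 1) ω)))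
    linarith
  have step4 : condH b p (fun ω => (fun i : Fin (k - l₂) => x (i.val + 1) ω)) (fun ω => ((fun i : Fin l₁ => x (i.val + 1) ω), (fun j : Fin l₂ => d (j.val + 1) ω))) ≤ ∑ i : Fin (k - l₂), condH b p (x (i.val + 1)) (fun ω => ((fun i : Fin l₁ => x (i.val + 1) ω), (fun j : Fin l₂ => d (j.val + 1) ω))) :=
    condH_tuple_le hb hp (fun i : Fin (k - l₂) => x (i.val + 1)) (fun ω => ((fun i : Fin l₁ => x (i.val + 1) ω), (fun j : Fin l₂ => d (j.val + 1) ω)))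
  -- reindex the sum
  have hsum1 : ∑ i : Fin (k - l₂), condH b p (x (i.val + 1)) (fun ω => ((fun i : Fin l₁ => x (i.val + 1) ω), (fun j : Fin l₂ => d (j.val + 1) ω)))
      = ∑ i ∈ Finset.Ioc 0 (k - l₂), condH b p (x i) (fun ω => ((fun i : Fin l₁ => x (i.val + 1) ω), (fun j : Fin l₂ => d (j.val + 1) ω))) := by
    rw [Fin.sum_univ_eq_sum_range (fun i => condH b p (x (i + 1)) (fun ω => ((fun i : Fin l₁ => x (i.val + 1) ω), (fun j : Fin l₂ => d (j.val + 1) ω)))) (k - l₂)]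
    refine Finset.sum_nbij' (fun i => i + 1) (fun i => i - 1) ?_ ?_ ?_ ?_ ?_ <;>
      intros <;> simp_all [Finset.mem_range, Finset.mem_Ioc] <;> omega
  have hsplit := Finset.sum_Ioc_consecutive (fun i => condH b p (x i) (fun ω => ((fun i : Fin l₁ => x (i.val + 1) ω), (fun j : Fin l₂ => d (j.val + 1) ω))))
    (Nat.zero_le l₁) hl1n
  have hzero1 : ∑ i ∈ Finset.Ioc 0 l₁, condH b p (x i) (fun ω => ((fun i : Fin l₁ => x (i.val + 1) ω), (fun j : Fin l₂ => d (j.val + 1) ω))) = 0 :=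
    Finset.sum_eq_zero hxE
  have hfinal : ∑ i ∈ Finset.Ioc l₁ (k - l₂), condH b p (x i) (fun ω => ((fun i : Fin l₁ => x (i.val + 1) ω), (fun j : Fin l₂ => d (j.val + 1) ω)))
      ≤ ∑ i ∈ Finset.Ioc l₁ (k - l₂),
        (α - mutI b p (x i) (fun ω => fun j : Fin l₂ => dd i (j.val + 1) ω)) :=
    Finset.sum_le_sum step6
  linarith [step1, step2, step4, hfME, hsum1, hsplit, hzero1, hfinal]
end

section
/- Let K be a finite field with a subfield F of cardinality q and [K : F] = m. Let R and K' be integers with 1 ≤ R ≤ K' and R ≤ m, and let z_1, …, z_R ∈ K be linearly independent over F. Let f = (f_1, …, f_{K'−R}) be an arbitrary random vector with values in K^{K'−R}, and let r = (r_1, …, r_R) be uniformly distributed on K^R and independent of f. Define the random vector e = (e_1, …, e_R) by e_j = ∑_{i=1}^{R} r_i · z_j^{q^{i−1}} + ∑_{i=R+1}^{K'} f_{i−R} · z_j^{q^{i−1}} (the evaluations of the linearized polynomial with coefficient vector (r, f) at the points z_1, …, z_R). Then e is uniformly distributed on K^R and is independent of f; moreover, for every fixed value of f, the map r ↦ e is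 a bijection of K^R, so r is uniquely determined by the pair (f, e). -/
open Polynomial in
lemma moore_injective {F K : Type} [Field F] [Field K] [Algebra F K] [Fintype F] [Fintype K]
    (q : ℕ) (hq : Fintype.card F = q) {R : ℕ} (hR1 : 1 ≤ R)
    (z : Fin R → K) (hz : LinearIndependent F z) :
    Function.Injective (fun a : Fin R → K => fun j : Fin R => ∑ i : Fin R, a i * z j ^ q ^ (i : ℕ)) := by
  have hq2 : 2 ≤ q := hq ▸ Fintype.one_lt_card
  -- char setup
  set p := ringChar F with hp
  haveI : Fact p.Prime := ⟨CharP.char_is_prime F p⟩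
  haveI : CharP K p := charP_of_injective_algebraMap (algebraMap F K).injective p
  obtain ⟨n, hpp, hcard⟩ := FiniteField.card F p
  have hqpn : q = p ^ (n : ℕ) := by rw [← hq, hcard]
  -- reduce to: a ≠ 0 with all evaluations zero is impossible
  suffices h : ∀ a : Fin R → K, (∀ j, ∑ i : Fin R, a i * z j ^ q ^ (i : ℕ) = 0) → a = 0 by
    intro a b hab
    have : ∀ j, ∑ i : Fin R, (a i - b i) * z j ^ q ^ (i : ℕ) = 0 := by
      intro j
      have := congrFun hab j
      simp only at this
      simp [sub_mul, Finset.sum_sub_distrib, this]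
    have := h _ this
    funext i
    have := congrFun this i
    simpa [sub_eq_zero] using this
  intro a ha
  by_contra hne
  obtain ⟨i0, hi0⟩ : ∃ i, a i ≠ 0 := by
    by_contra h'
    push_neg at h'
    exact hne (funext h')
  -- the linearized polynomial
  set P : K[X] := ∑ i : Fin R, C (a i) * X ^ (q ^ (i : ℕ)) with hP
  have hcoeff : ∀ i : Fin R, P.coeff (q ^ (i : ℕ)) = a i := by
    intro i
    rw [hP, Polynomial.finset_sum_coeff]
    rw [Finset.sum_eq_single i]
    · simp
    · intro b _ hbi
      simp only [coeff_C_mul, coeff_X_pow]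
      rw [if_neg (fun hcon => hbi (Fin.ext (Nat.pow_right_injective hq2 hcon.symm))), mul_zero]
    · simp
  have hPne : P ≠ 0 := fun h0 => hi0 (by rw [← hcoeff i0, h0, Polynomial.coeff_zero])
  have hdeg : P.natDegree ≤ q ^ (R - 1) := by
    apply Polynomial.natDegree_sum_le_of_forall_le
    intro i _
    calc (C (a i) * X ^ (q ^ (i : ℕ))).natDegree ≤ q ^ (i : ℕ) := by
          apply (Polynomial.natDegree_C_mul_le _ _).trans
          simp
      _ ≤ q ^ (R - 1) := Nat.pow_le_pow_right (by omega) (by omega)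
  -- eval is F-linear
  have heval : ∀ x : K, P.eval x = ∑ i : Fin R, a i * x ^ q ^ (i : ℕ) := by
    intro x; rw [hP]; simp [Polynomial.eval_finset_sum]
  have hadd : ∀ x y : K, P.eval (x + y) = P.eval x + P.eval y := by
    intro x y
    simp only [heval]
    rw [← Finset.sum_add_distrib]
    congr 1; funext i
    rw [hqpn, ← pow_mul, add_pow_char_pow, mul_add, pow_mul]
  have hsmul : ∀ (c : F) (x : K), P.eval (c • x) = c • P.eval x := by
    intro c x
    simp only [heval, Algebra.smul_def, Finset.mul_sum]
    congr 1; funext i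
    rw [mul_pow, ← map_pow, ← hq, FiniteField.pow_card_pow]
    ring
  -- all elements of span are roots
  have hroot : ∀ w ∈ Submodule.span F (Set.range z), P.eval w = 0 := by
    intro w hw
    induction hw using Submodule.span_induction with
    | mem x hx =>
        obtain ⟨j, rfl⟩ := hx
        rw [heval]; exact ha j
    | zero =>
        rw [heval]
        apply Finset.sum_eq_zero
        intro i _
        rw [zero_pow (by positivity), mul_zero]
    | add x y _ _ hx hy => rw [hadd, hx, hy, add_zero]
    | smul c x _ hx => rw [hsmul, hx, smul_zero]
  -- cardinality of span
  classical
  haveI : Fintype (Submodule.span F (Set.range z)) := Fintype.ofFinite _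
  have hcardspan : Fintype.card (Submodule.span F (Set.range z)) = q ^ R := by
    rw [Module.card_eq_pow_finrank (K := F), hq, finrank_span_eq_card hz, Fintype.card_fin]
  -- injection into roots
  have hle : Fintype.card (Submodule.span F (Set.range z)) ≤ P.roots.toFinset.card := by
    rw [← Fintype.card_coe P.roots.toFinset]
    have hmem : ∀ w : Submodule.span F (Set.range z), (w : K) ∈ P.roots.toFinset := by
      intro w
      rw [Multiset.mem_toFinset, Polynomial.mem_roots hPne]
      exact hroot w.1 w.2
    have hinj : Function.Injective
        (fun w : Submodule.span F (Set.range z) =>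
          (⟨(w : K), hmem w⟩ : {x // x ∈ P.roots.toFinset})) := by
      intro u v huv
      exact Subtype.ext (Subtype.mk_eq_mk.mp huv)
    exact Fintype.card_le_of_injective _ hinj
  have hle2 : P.roots.toFinset.card ≤ P.natDegree :=
    le_trans (Multiset.toFinset_card_le _) (Polynomial.card_roots' P)
  have : q ^ R ≤ q ^ (R - 1) := by
    rw [← hcardspan]; exact le_trans hle (le_trans hle2 hdeg)
  have : q ^ (R - 1) < q ^ R := Nat.pow_lt_pow_right (by omega) (by omega)
  omega

lemma sum_prEq_aux {Ω : Type} [Fintype Ω] (p : Ω → ℝ) {S : Type} [Fintype S] [DecidableEq S]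
    (X : Ω → S) : ∑ x, prEq p X x = ∑ ω, p ω := by
  unfold prEq
  rw [Finset.sum_comm]
  simp

lemma prEq_fst_aux {Ω : Type} [Fintype Ω] (p : Ω → ℝ) {S T : Type} [Fintype T]
    [DecidableEq S] [DecidableEq T] (X : Ω → S) (Y : Ω → T) (x : S) :
    prEq p X x = ∑ y : T, prEq p (fun ω => (X ω, Y ω)) (x, y) := by
  unfold prEq
  rw [Finset.sum_comm]
  apply Finset.sum_congr rfl
  intro ω _
  simp [Prod.ext_iff, ite_and]


/-- **Secrecy of Gabidulin-code pre-coding.**  `K` is a finite field with subfield `F`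
of cardinality `q` and `[K : F] = m` (the subfield is modelled by the field extension
`Algebra F K`).  The linearized polynomial with coefficient vector `(r, f)` — the first
`R` coefficients uniformly random and independent of the data `f` — is evaluated at `R`
points `z_1, …, z_R ∈ K` that are linearly independent over `F`.  Then the observation
`e` is uniform on `K^R` and independent of `f`, and for every fixed value of `f` the map
`r ↦ e` is a bijection of `K^R` (so `r` is determined by `(f, e)`). -/
theorem gabidulin_precoding_secrecy
    {F K : Type} [Field F] [Field K] [Algebra F K] [Fintype F] [Fintype K]
    [DecidableEq K]
    (q m : ℕ) (hq : Fintype.card F = q) (hm : Module.finrank F K = m)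
    (R K' : ℕ) (hR1 : 1 ≤ R) (hRK : R ≤ K') (hRm : R ≤ m)
    (z : Fin R → K) (hz : LinearIndependent F z)
    {Ω : Type} [Fintype Ω] (p : Ω → ℝ) (hp : IsPMF p)
    (f : Ω → (Fin (K' - R) → K)) (r : Ω → (Fin R → K))
    -- `r` is uniformly distributed on `K^R`
    (hrunif : ∀ v, prEq p r v = 1 / (Fintype.card K : ℝ) ^ R)
    -- `r` is independent of `f`
    (hindep : IndepRV p r f)
    -- the evaluation map: `E fv rv j` evaluates the linearized polynomial with
    -- coefficients `(rv, fv)` at the point `z j`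
    (E : (Fin (K' - R) → K) → (Fin R → K) → (Fin R → K))
    (hE : ∀ fv rv j, E fv rv j =
      (∑ i : Fin R, rv i * z j ^ q ^ (i : ℕ)) +
      ∑ i : Fin (K' - R), fv i * z j ^ q ^ (R + (i : ℕ)))
    (e : Ω → (Fin R → K)) (he : ∀ ω, e ω = E (f ω) (r ω)) :
    (∀ v, prEq p e v = 1 / (Fintype.card K : ℝ) ^ R) ∧
    IndepRV p e f ∧
    (∀ fv, Function.Bijective (fun rv => E fv rv)) := by
  classical
  -- bijectivity of the linear part
  have hLinj := moore_injective q hq hR1 z hz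
  have hLbij : Function.Bijective
      (fun a : Fin R → K => fun j : Fin R => ∑ i : Fin R, a i * z j ^ q ^ (i : ℕ)) :=
    Finite.injective_iff_bijective.mp hLinj
  have hEbij : ∀ fv, Function.Bijective (fun rv => E fv rv) := by
    intro fv
    have hcomp : (fun rv => E fv rv) =
        (fun w : Fin R → K =>
            w + fun j => ∑ i : Fin (K' - R), fv i * z j ^ q ^ (R + (i : ℕ))) ∘
        (fun a : Fin R → K => fun j : Fin R => ∑ i : Fin R, a i * z j ^ q ^ (i : ℕ)) := by
      funext rv
      funext j
      simp [hE, Function.comp]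
    rw [hcomp]
    exact (Equiv.addRight _).bijective.comp hLbij
  -- joint distribution
  have hjoint : ∀ v fv, prEq p (fun ω => (e ω, f ω)) (v, fv) =
      1 / (Fintype.card K : ℝ) ^ R * prEq p f fv := by
    intro v fv
    set EV := Equiv.ofBijective _ (hEbij fv) with hEV
    set rv₀ := EV.symm v with hrv₀
    have hErv₀ : E fv rv₀ = v := EV.apply_symm_apply v
    have key : ∀ ω, ((e ω, f ω) = (v, fv)) ↔ ((r ω, f ω) = (rv₀, fv)) := by
      intro ω
      simp only [Prod.mk.injEq]
      constructor
      · rintro ⟨hev, hfv⟩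
        refine ⟨?_, hfv⟩
        apply (hEbij fv).injective
        show E fv (r ω) = E fv rv₀
        rw [hErv₀, ← hev, he, hfv]
      · rintro ⟨hrv, hfv⟩
        exact ⟨by rw [he, hfv, hrv, hErv₀], hfv⟩
    have : prEq p (fun ω => (e ω, f ω)) (v, fv) =
        prEq p (fun ω => (r ω, f ω)) (rv₀, fv) := by
      unfold prEq
      apply Finset.sum_congr rfl
      intro ω _
      exact if_congr (key ω) rfl rfl
    rw [this, hindep rv₀ fv, hrunif rv₀]
  have hfone : ∑ fv, prEq p f fv = 1 := by
    rw [sum_prEq_aux]; exact hp.2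
  have hunif : ∀ v, prEq p e v = 1 / (Fintype.card K : ℝ) ^ R := by
    intro v
    rw [prEq_fst_aux p e f v]
    simp only [hjoint]
    rw [← Finset.mul_sum, hfone, mul_one]
  refine ⟨hunif, ?_, hEbij⟩
  intro v fv
  rw [hjoint v fv, hunif v]
end

section
/- Let b > 1, let α ≥ β ≥ 0 be real numbers, and let k, ℓ₁, ℓ₂ be integers with ℓ₂ ≥ 1 and ℓ₁ + ℓ₂ < k. Let f; x_1, …, x_{k−ℓ₂}; x'_1, …, x'_{ℓ₂}; d_1, …, d_{ℓ₂}; and d_{i,j} for ℓ₁+1 ≤ i ≤ k−ℓ₂, 1 ≤ j ≤ ℓ₂ be random variables taking values in finite sets on a common probability space satisfying: (i) I(f; (x_1, …, x_{ℓ₁}, d_1, …, d_{ℓ₂})) = 0; (ii) H(x'_j | d_j) = 0 for every j; (iii) H(d_{i,j} | d_j) = 0 for all i, j; (iv) H(f | x_1, …, x_{k−ℓ₂}, x'_1, …, x'_{ℓ₂}) = 0; (v) H(x_i) ≤ α for every ℓ₁+1 ≤ i ≤ k−ℓ₂; and additionally (vi) for every ℓ₁+1 ≤ i ≤ k−ℓ₂,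 the download d_{i,1} is a function of the node content, H(d_{i,1} | x_i) = 0, and H(d_{i,1}) ≥ β. Then H(f) ≤ (k − ℓ₁ − ℓ₂)·(α − β). -/
namespace MSRAux

variable {Ω : Type} [Fintype Ω] {b : ℝ} {p : Ω → ℝ}

lemma prEq_nonneg (hp0 : ∀ ω, 0 ≤ p ω) {S : Type} [DecidableEq S] (X : Ω → S) (s : S) :
    0 ≤ prEq p X s :=
  Finset.sum_nonneg fun ω _ => by by_cases h : X ω = s <;> simp [h, hp0 ω]

lemma sum_prEq (hp1 : ∑ ω, p ω = 1) {S : Type} [Fintype S] [DecidableEq S] (X : Ω → S) :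
    ∑ s, prEq p X s = 1 := by
  rw [← hp1]
  unfold prEq
  rw [Finset.sum_comm]
  exact Finset.sum_congr rfl fun ω _ => by simp [Finset.sum_ite_eq]

/-- Grouping: the distribution of `g ∘ W` is the pushforward. -/
lemma prEq_comp {S T : Type} [Fintype S] [DecidableEq S] [DecidableEq T]
    (W : Ω → S) (g : S → T) (Y : Ω → T) (hY : ∀ ω, Y ω = g (W ω)) (t : T) :
    prEq p Y t = ∑ s, if g s = t then prEq p W s else 0 := by
  unfold prEq
  have h1 : ∀ s : S, (if g s = t then ∑ ω, if W ω = s then p ω else 0 else 0)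
      = ∑ ω, if g s = t then (if W ω = s then p ω else 0) else 0 := by
    intro s; split <;> simp
  rw [Finset.sum_congr rfl fun s _ => h1 s, Finset.sum_comm]
  refine Finset.sum_congr rfl fun ω _ => ?_
  rw [Finset.sum_eq_single (W ω)]
  · by_cases h : g (W ω) = t <;> simp [h, hY ω]
  · intro s _ hs
    simp [Ne.symm hs]
  · simp

lemma prEq_le_comp (hp0 : ∀ ω, 0 ≤ p ω) {S T : Type} [DecidableEq S] [DecidableEq T]
    (W : Ω → S) (g : S → T) (Y : Ω → T) (hY : ∀ ω, Y ω = g (W ω)) (s : S) :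
    prEq p W s ≤ prEq p Y (g s) := by
  refine Finset.sum_le_sum fun ω _ => ?_
  by_cases h : W ω = s
  · simp [h, hY ω]
  · simp only [h, if_false]
    split <;> simp [hp0 ω]

/-- Marginalization of a sum against the pushforward. -/
lemma sum_prEq_comp_mul {S T : Type} [Fintype S] [DecidableEq S] [Fintype T] [DecidableEq T]
    (W : Ω → S) (g : S → T) (Y : Ω → T) (hY : ∀ ω, Y ω = g (W ω)) (φ : T → ℝ) :
    ∑ s, prEq p W s * φ (g s) = ∑ t, prEq p Y t * φ t := by
  have h1 : ∀ t, prEq p Y t * φ t = ∑ s, if g s = t then prEq p W s * φ t else 0 := by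
    intro t
    rw [prEq_comp W g Y hY t, Finset.sum_mul]
    exact Finset.sum_congr rfl fun s _ => by split <;> simp
  rw [Finset.sum_congr rfl fun t _ => h1 t, Finset.sum_comm]
  refine Finset.sum_congr rfl fun s _ => ?_
  rw [Finset.sum_ite_eq]
  simp

/-- Entropy is invariant under injective recoding. -/
lemma entH_comp_inj {S T : Type} [Fintype S] [DecidableEq S] [Fintype T] [DecidableEq T]
    (W : Ω → S) (g : S → T) (hg : Function.Injective g)
    (Y : Ω → T) (hY : ∀ ω, Y ω = g (W ω)) :
    entH b p Y = entH b p W := by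
  have hpr : ∀ s, prEq p Y (g s) = prEq p W s := fun s => by
    unfold prEq
    exact Finset.sum_congr rfl fun ω _ => by rw [hY ω]; simp only [hg.eq_iff]
  have h0 : ∀ t, t ∉ Finset.univ.image g → prEq p Y t = 0 := by
    intro t ht
    unfold prEq
    refine Finset.sum_eq_zero fun ω _ => ?_
    have : Y ω ≠ t := fun h => ht (by simp [← h, hY ω])
    simp [this]
  unfold entH
  congr 1
  rw [← Finset.sum_subset (Finset.subset_univ (Finset.univ.image g))
      (fun t _ ht => by rw [h0 t ht]; simp)]
  rw [Finset.sum_image (fun s _ s' _ h => hg h)]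
  exact Finset.sum_congr rfl fun s _ => by rw [hpr]

/-- Data processing: entropy never increases under a deterministic map. -/
lemma entH_comp_le (hb : 1 < b) (hp : IsPMF p)
    {S T : Type} [Fintype S] [DecidableEq S] [Fintype T] [DecidableEq T]
    (W : Ω → S) (g : S → T) (Y : Ω → T) (hY : ∀ ω, Y ω = g (W ω)) :
    entH b p Y ≤ entH b p W := by
  unfold entH
  rw [← sum_prEq_comp_mul W g Y hY (fun t => Real.logb b (prEq p Y t))]
  have key : ∀ s : S, prEq p W s * Real.logb b (prEq p W s)
      ≤ prEq p W s * Real.logb b (prEq p Y (g s)) := by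
    intro s
    rcases eq_or_lt_of_le (prEq_nonneg hp.1 W s) with h | h
    · rw [← h]; simp
    · exact mul_le_mul_of_nonneg_left
        (Real.logb_le_logb_of_le hb h (prEq_le_comp hp.1 W g Y hY s)) h.le
  have := Finset.sum_le_sum fun s (_ : s ∈ Finset.univ) => key s
  linarith

/-- Gibbs-type inequality. -/
lemma gibbs {ι : Type} [Fintype ι] (hb : 1 < b) (a q : ι → ℝ)
    (ha : ∀ i, 0 ≤ a i) (hq : ∀ i, 0 ≤ q i) (habs : ∀ i, q i = 0 → a i = 0)
    (hsum : ∑ i, q i ≤ ∑ i, a i) :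
    ∑ i, a i * Real.logb b (q i / a i) ≤ 0 := by
  have key : ∀ i, a i * Real.log (q i / a i) ≤ q i - a i := by
    intro i
    rcases eq_or_lt_of_le (ha i) with h | h
    · rw [← h]; simpa using hq i
    · have hqi : 0 < q i := by
        rcases eq_or_lt_of_le (hq i) with h' | h'
        · exact absurd (habs i h'.symm) (by linarith)
        · exact h'
      have := Real.log_le_sub_one_of_pos (div_pos hqi h)
      have h2 := mul_le_mul_of_nonneg_left this h.le
      rw [mul_sub, mul_one, mul_div_cancel₀ _ (ne_of_gt h)] at h2
      linarith
  have hsum2 : ∑ i, a i * Real.log (q i / a i) ≤ 0 := by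
    have := Finset.sum_le_sum fun i (_ : i ∈ Finset.univ) => key i
    rw [Finset.sum_sub_distrib] at this
    linarith
  have hlog : (0:ℝ) < Real.log b := Real.log_pos hb
  calc ∑ i, a i * Real.logb b (q i / a i)
      = (∑ i, a i * Real.log (q i / a i)) / Real.log b := by
        rw [Finset.sum_div]
        exact Finset.sum_congr rfl fun i _ => by rw [Real.logb, mul_div_assoc]
    _ ≤ 0 := div_nonpos_of_nonpos_of_nonneg hsum2 hlog.le

/-- Marginalizing out the first coordinate. -/
lemma marg_fst {S T : Type} [Fintype S] [DecidableEq S] [Fintype T] [DecidableEq T]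
    (A : Ω → S) (B : Ω → T) (t : T) :
    ∑ s, prEq p (fun ω => (A ω, B ω)) (s, t) = prEq p B t := by
  unfold prEq
  rw [Finset.sum_comm]
  refine Finset.sum_congr rfl fun ω _ => ?_
  rw [Finset.sum_eq_single (A ω)]
  · by_cases h : B ω = t <;> simp [h, Prod.ext_iff]
  · intro s _ hs; simp [Prod.ext_iff, Ne.symm hs]
  · simp

/-- Marginalizing out the second coordinate. -/
lemma marg_snd {S T : Type} [Fintype S] [DecidableEq S] [Fintype T] [DecidableEq T]
    (A : Ω → S) (B : Ω → T) (s : S) :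
    ∑ t, prEq p (fun ω => (A ω, B ω)) (s, t) = prEq p A s := by
  unfold prEq
  rw [Finset.sum_comm]
  refine Finset.sum_congr rfl fun ω _ => ?_
  rw [Finset.sum_eq_single (B ω)]
  · by_cases h : A ω = s <;> simp [h, Prod.ext_iff]
  · intro t _ ht; simp [Prod.ext_iff, Ne.symm ht]
  · simp

/-- Submodularity of Shannon entropy: `H(A,B,C) + H(B) ≤ H(A,B) + H(B,C)`. -/
lemma submod (hb : 1 < b) (hp : IsPMF p)
    {S T U : Type} [Fintype S] [DecidableEq S] [Fintype T] [DecidableEq T]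
    [Fintype U] [DecidableEq U] (A : Ω → S) (B : Ω → T) (C : Ω → U) :
    entH b p (fun ω => (A ω, B ω, C ω)) + entH b p B
      ≤ entH b p (fun ω => (A ω, B ω)) + entH b p (fun ω => (B ω, C ω)) := by
  set pW := prEq p (fun ω => (A ω, B ω, C ω)) with hpW
  set pAB := prEq p (fun ω => (A ω, B ω)) with hpAB
  set pBC := prEq p (fun ω => (B ω, C ω)) with hpBC
  set pB := prEq p B with hpB
  set q : S × T × U → ℝ := fun w => pAB (w.1, w.2.1) * pBC (w.2.1, w.2.2) / pB w.2.1 with hq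
  have hW0 : ∀ w, 0 ≤ pW w := prEq_nonneg hp.1 _
  have hAB0 : ∀ y, 0 ≤ pAB y := prEq_nonneg hp.1 _
  have hBC0 : ∀ y, 0 ≤ pBC y := prEq_nonneg hp.1 _
  have hB0 : ∀ t, 0 ≤ pB t := prEq_nonneg hp.1 _
  have hWAB : ∀ w : S × T × U, pW w ≤ pAB (w.1, w.2.1) := fun w =>
    prEq_le_comp hp.1 _ (fun w : S × T × U => (w.1, w.2.1)) _ (fun ω => rfl) w
  have hWBC : ∀ w : S × T × U, pW w ≤ pBC (w.2.1, w.2.2) := fun w =>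
    prEq_le_comp hp.1 _ (fun w : S × T × U => (w.2.1, w.2.2)) _ (fun ω => rfl) w
  have hWB : ∀ w : S × T × U, pW w ≤ pB w.2.1 := fun w =>
    prEq_le_comp hp.1 _ (fun w : S × T × U => w.2.1) _ (fun ω => rfl) w
  have hq0 : ∀ w, 0 ≤ q w := fun w =>
    div_nonneg (mul_nonneg (hAB0 _) (hBC0 _)) (hB0 _)
  have habs : ∀ w, q w = 0 → pW w = 0 := by
    intro w hw
    rcases eq_or_lt_of_le (hB0 w.2.1) with hB | hB
    · exact le_antisymm (le_trans (hWB w) hB.symm.le) (hW0 w)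
    · rw [hq, div_eq_zero_iff] at hw
      rcases hw with hw | hw
      · rcases mul_eq_zero.mp hw with hw | hw
        · exact le_antisymm (hw ▸ hWAB w) (hW0 w)
        · exact le_antisymm (hw ▸ hWBC w) (hW0 w)
      · exact absurd hw (ne_of_gt hB)
  have hsumW : ∑ w, pW w = 1 := sum_prEq hp.2 _
  have hsumq : ∑ w, q w ≤ ∑ w, pW w := by
    rw [hsumW]
    calc ∑ w : S × T × U, q w
        = ∑ s, ∑ t, pAB (s, t) / pB t * pB t := by
          rw [Fintype.sum_prod_type]
          refine Finset.sum_congr rfl fun s _ => ?_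
          rw [Fintype.sum_prod_type]
          refine Finset.sum_congr rfl fun t _ => ?_
          have e : ∀ u, q (s, (t, u)) = pAB (s, t) / pB t * pBC (t, u) := fun u => by
            rw [hq]; ring
          rw [Finset.sum_congr rfl fun u _ => e u, ← Finset.mul_sum, marg_snd B C t]
      _ = ∑ t, (∑ s, pAB (s, t)) / pB t * pB t := by
          rw [Finset.sum_comm]
          refine Finset.sum_congr rfl fun t _ => ?_
          rw [Finset.sum_div, Finset.sum_mul]
      _ = ∑ t, pB t * pB t / pB t := by
          refine Finset.sum_congr rfl fun t _ => ?_
          rw [marg_fst A B t]; ring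
      _ ≤ ∑ t, pB t := Finset.sum_le_sum fun t _ => by
          rcases eq_or_lt_of_le (hB0 t) with h | h
          · rw [← h]; simp
          · rw [mul_div_assoc, div_self (ne_of_gt h), mul_one]
      _ = 1 := sum_prEq hp.2 B
  have hgibbs : ∑ w, pW w * Real.logb b (q w / pW w) ≤ 0 :=
    gibbs hb pW q hW0 hq0 habs hsumq
  have term : ∀ w : S × T × U, pW w * Real.logb b (q w / pW w)
      = pW w * Real.logb b (pAB (w.1, w.2.1)) + pW w * Real.logb b (pBC (w.2.1, w.2.2))
        - pW w * Real.logb b (pB w.2.1) - pW w * Real.logb b (pW w) := by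
    intro w
    rcases eq_or_lt_of_le (hW0 w) with h | h
    · rw [← h]; ring
    · have hAB : 0 < pAB (w.1, w.2.1) := lt_of_lt_of_le h (hWAB w)
      have hBC : 0 < pBC (w.2.1, w.2.2) := lt_of_lt_of_le h (hWBC w)
      have hB : 0 < pB w.2.1 := lt_of_lt_of_le h (hWB w)
      rw [hq]
      rw [Real.logb_div (by positivity) (ne_of_gt h),
          Real.logb_div (by positivity) (ne_of_gt hB),
          Real.logb_mul (ne_of_gt hAB) (ne_of_gt hBC)]
      ring
  have m1 : ∑ w : S × T × U, pW w * Real.logb b (pAB (w.1, w.2.1))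
      = ∑ y : S × T, pAB y * Real.logb b (pAB y) :=
    sum_prEq_comp_mul (fun ω => (A ω, B ω, C ω)) (fun w => (w.1, w.2.1))
      (fun ω => (A ω, B ω)) (fun ω => rfl) (fun y => Real.logb b (pAB y))
  have m2 : ∑ w : S × T × U, pW w * Real.logb b (pBC (w.2.1, w.2.2))
      = ∑ y : T × U, pBC y * Real.logb b (pBC y) :=
    sum_prEq_comp_mul (fun ω => (A ω, B ω, C ω)) (fun w => (w.2.1, w.2.2))
      (fun ω => (B ω, C ω)) (fun ω => rfl) (fun y => Real.logb b (pBC y))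
  have m3 : ∑ w : S × T × U, pW w * Real.logb b (pB w.2.1)
      = ∑ t, pB t * Real.logb b (pB t) :=
    sum_prEq_comp_mul (fun ω => (A ω, B ω, C ω)) (fun w => w.2.1)
      B (fun ω => rfl) (fun t => Real.logb b (pB t))
  have hexp : ∑ w, pW w * Real.logb b (q w / pW w)
      = (∑ y : S × T, pAB y * Real.logb b (pAB y))
        + (∑ y : T × U, pBC y * Real.logb b (pBC y))
        - (∑ t, pB t * Real.logb b (pB t))
        - (∑ w, pW w * Real.logb b (pW w)) := by
    rw [Finset.sum_congr rfl fun w _ => term w]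
    rw [Finset.sum_sub_distrib, Finset.sum_sub_distrib, Finset.sum_add_distrib]
    rw [m1, m2, m3]
  have hH1 : entH b p (fun ω => (A ω, B ω)) = -∑ y : S × T, pAB y * Real.logb b (pAB y) := rfl
  have hH2 : entH b p (fun ω => (B ω, C ω)) = -∑ y : T × U, pBC y * Real.logb b (pBC y) := rfl
  have hH3 : entH b p B = -∑ t, pB t * Real.logb b (pB t) := rfl
  have hH4 : entH b p (fun ω => (A ω, B ω, C ω)) = -∑ w, pW w * Real.logb b (pW w) := rfl
  rw [hH1, hH2, hH3, hH4]
  linarith [hexp ▸ hgibbs]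

/-- If `H(Z,W) = H(W)` then `H(A,W) + H(Z) ≤ H(A,Z) + H(W)`. -/
lemma key_ineq (hb : 1 < b) (hp : IsPMF p)
    {SA SZ SW : Type} [Fintype SA] [DecidableEq SA] [Fintype SZ] [DecidableEq SZ]
    [Fintype SW] [DecidableEq SW] (A : Ω → SA) (Z : Ω → SZ) (W : Ω → SW)
    (hZW : entH b p (fun ω => (Z ω, W ω)) = entH b p W) :
    entH b p (fun ω => (A ω, W ω)) + entH b p Z
      ≤ entH b p (fun ω => (A ω, Z ω)) + entH b p W := by
  have h1 := submod hb hp A Z W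
  have h2 : entH b p (fun ω => (A ω, W ω)) ≤ entH b p (fun ω => (A ω, Z ω, W ω)) :=
    (entH_comp_le hb hp _ (fun w : SA × SZ × SW => (w.1, w.2.2)) _ (fun ω => rfl))
  linarith

/-- If `H(Z,Y) = H(Y)` and `Y` is a function of `W`, then `H(Z,W) = H(W)`. -/
lemma removal (hb : 1 < b) (hp : IsPMF p)
    {SZ SY SW : Type} [Fintype SZ] [DecidableEq SZ] [Fintype SY] [DecidableEq SY]
    [Fintype SW] [DecidableEq SW] (Z : Ω → SZ) (Y : Ω → SY) (W : Ω → SW)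
    (g : SW → SY) (hY : ∀ ω, Y ω = g (W ω))
    (hZY : entH b p (fun ω => (Z ω, Y ω)) = entH b p Y) :
    entH b p (fun ω => (Z ω, W ω)) = entH b p W := by
  have hYW : entH b p (fun ω => (Y ω, W ω)) = entH b p W :=
    entH_comp_inj W (fun w => (g w, w)) (fun w1 w2 h => congrArg Prod.snd h) _
      (fun ω => by rw [hY ω])
  have h1 := key_ineq hb hp Z Y W hYW
  have h2 : entH b p W ≤ entH b p (fun ω => (Z ω, W ω)) :=
    entH_comp_le hb hp _ (fun w : SZ × SW => w.2) _ (fun ω => rfl)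
  linarith

/-- Splitting off the last coordinate of a dependent tuple is injective. -/
lemma snoc_split_inj {T : ℕ → Type} (t : ℕ) :
    Function.Injective (fun (h : ∀ j : Fin (t+1), T j.val) =>
      ((h ⟨t, Nat.lt_succ_self t⟩,
        fun j : Fin t => h ⟨j.val, Nat.lt_succ_of_lt j.isLt⟩) :
          T t × ∀ j : Fin t, T j.val)) := by
  intro h1 h2 he
  have he1 := congrArg Prod.fst he
  have he2 := congrArg Prod.snd he
  funext j
  rcases Nat.lt_or_ge j.val t with hj | hj
  · have := congrFun he2 ⟨j.val, hj⟩
    exact this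
  · have hjt : j = ⟨t, Nat.lt_succ_self t⟩ :=
      Fin.ext (le_antisymm (Nat.le_of_lt_succ j.isLt) hj)
    rw [hjt]; exact he1

end MSRAux

open MSRAux

/-- **Corollary: secure file size bound `H(f) ≤ (k - ℓ₁ - ℓ₂)(α - β)` at the MSR point.**
Same setting as the general MSR secrecy bound, with the additional hypothesis that for
each unobserved node `i` the download `d_{i,1}` is a function of the node content and has
entropy at least `β`. -/
theorem msr_secrecy_capacity_corollary
    {Ω : Type} [Fintype Ω] (b : ℝ) (hb : 1 < b) (p : Ω → ℝ) (hp : IsPMF p)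
    (α β : ℝ) (hβ0 : 0 ≤ β) (hβα : β ≤ α)
    (k l₁ l₂ : ℕ) (hl₂ : 1 ≤ l₂) (hk : l₁ + l₂ < k)
    {F : Type} [Fintype F] [DecidableEq F] (f : Ω → F)
    {X : ℕ → Type} [∀ i, Fintype (X i)] [∀ i, DecidableEq (X i)] (x : ∀ i, Ω → X i)
    {X' : ℕ → Type} [∀ j, Fintype (X' j)] [∀ j, DecidableEq (X' j)] (x' : ∀ j, Ω → X' j)
    {D : ℕ → Type} [∀ j, Fintype (D j)] [∀ j, DecidableEq (D j)] (d : ∀ j, Ω → D j)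
    {DD : ℕ → ℕ → Type} [∀ i j, Fintype (DD i j)] [∀ i j, DecidableEq (DD i j)]
    (dd : ∀ i j, Ω → DD i j)
    -- (i) security against the (ℓ₁, ℓ₂)-eavesdropper
    (hsec : mutI b p f (fun ω =>
      ((fun i : Fin l₁ => x (i.val + 1) ω), (fun j : Fin l₂ => d (j.val + 1) ω))) = 0)
    -- (ii) each repaired node is a function of its downloads
    (hrep : ∀ j, 1 ≤ j → j ≤ l₂ → condH b p (x' j) (d j) = 0)
    -- (iii) each per-node download is a function of the total download
    (hdown : ∀ i j, l₁ + 1 ≤ i → i ≤ k - l₂ → 1 ≤ j → j ≤ l₂ →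
      condH b p (dd i j) (d j) = 0)
    -- (iv) reconstruction from the k nodes x_1, …, x_{k-ℓ₂}, x'_1, …, x'_{ℓ₂}
    (hrec : condH b p f (fun ω =>
      ((fun i : Fin (k - l₂) => x (i.val + 1) ω), (fun j : Fin l₂ => x' (j.val + 1) ω))) = 0)
    -- (v) per-node storage bound
    (hstore : ∀ i, l₁ + 1 ≤ i → i ≤ k - l₂ → entH b p (x i) ≤ α)
    -- (vi) the download d_{i,1} is a function of the node content and has entropy ≥ β
    (hfun : ∀ i, l₁ + 1 ≤ i → i ≤ k - l₂ → condH b p (dd i 1) (x i) = 0)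
    (hent : ∀ i, l₁ + 1 ≤ i → i ≤ k - l₂ → β ≤ entH b p (dd i 1)) :
    entH b p f ≤ ((k : ℝ) - l₁ - l₂) * (α - β) := by
  classical
  set m := k - l₂ - l₁ with hm
  -- Step 1: security gives H(f) = H(f, E) - H(E).
  have step1 : entH b p f
      = entH b p (fun ω => (f ω, ((fun i : Fin l₁ => x (i.val + 1) ω),
          (fun j : Fin l₂ => d (j.val + 1) ω))))
        - entH b p (fun ω => ((fun i : Fin l₁ => x (i.val + 1) ω),
          (fun j : Fin l₂ => d (j.val + 1) ω))) := by
    unfold mutI at hsec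
    beta_reduce at hsec
    linarith
  -- Telescoping bound: H(M_t, E) ≤ H(E) + t (α - β).
  have tel : ∀ t, t ≤ m →
      entH b p (fun ω => ((fun i : Fin t => x (l₁ + 1 + i.val) ω),
          ((fun i : Fin l₁ => x (i.val + 1) ω), (fun j : Fin l₂ => d (j.val + 1) ω))))
        ≤ entH b p (fun ω => ((fun i : Fin l₁ => x (i.val + 1) ω),
          (fun j : Fin l₂ => d (j.val + 1) ω))) + t * (α - β) := by
    intro t
    induction t with
    | zero =>
      intro _
      have h0 : entH b p (fun ω => ((fun i : Fin 0 => x (l₁ + 1 + i.val) ω),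
            ((fun i : Fin l₁ => x (i.val + 1) ω), (fun j : Fin l₂ => d (j.val + 1) ω))))
          = entH b p (fun ω => ((fun i : Fin l₁ => x (i.val + 1) ω),
            (fun j : Fin l₂ => d (j.val + 1) ω))) :=
        entH_comp_inj _ (fun e => (((fun i : Fin 0 => i.elim0) : ∀ i : Fin 0, X (l₁ + 1 + i.val)), e))
          (fun e1 e2 h => congrArg Prod.snd h) _
          (fun ω => by
            have h : (fun i : Fin 0 => x (l₁ + 1 + i.val) ω)
                = ((fun i : Fin 0 => i.elim0) : ∀ i : Fin 0, X (l₁ + 1 + i.val)) := by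
              funext i; exact i.elim0
            rw [h])
      rw [h0]; simp
    | succ t ih =>
      intro ht1
      have ht : t ≤ m := Nat.le_of_succ_le ht1
      have hi1 : l₁ + 1 ≤ l₁ + 1 + t := by omega
      have hi2 : l₁ + 1 + t ≤ k - l₂ := by omega
      have e1 : entH b p (fun ω => ((fun i : Fin (t+1) => x (l₁ + 1 + i.val) ω),
            ((fun i : Fin l₁ => x (i.val + 1) ω), (fun j : Fin l₂ => d (j.val + 1) ω))))
          = entH b p (fun ω => (x (l₁ + 1 + t) ω, ((fun i : Fin t => x (l₁ + 1 + i.val) ω),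
            ((fun i : Fin l₁ => x (i.val + 1) ω), (fun j : Fin l₂ => d (j.val + 1) ω))))) := by
        refine (entH_comp_inj _
          (fun w : (∀ i : Fin (t+1), X (l₁ + 1 + i.val)) ×
              ((∀ i : Fin l₁, X (i.val + 1)) × (∀ j : Fin l₂, D (j.val + 1))) =>
            (w.1 ⟨t, Nat.lt_succ_self t⟩,
              ((fun i : Fin t => w.1 ⟨i.val, Nat.lt_succ_of_lt i.isLt⟩), w.2)))
          ?_ _ (fun ω => rfl)).symm
        intro w1 w2 h
        have ha := congrArg (fun z => z.1) h
        have hb := congrArg (fun z => z.2.1) h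
        have hc := congrArg (fun z => z.2.2) h
        have hfst : w1.1 = w2.1 :=
          snoc_split_inj (T := fun n => X (l₁ + 1 + n)) t (Prod.ext ha hb)
        exact Prod.ext hfst hc
      have hd1 : entH b p (fun ω => (d 1 ω, ((fun i : Fin t => x (l₁ + 1 + i.val) ω),
            ((fun i : Fin l₁ => x (i.val + 1) ω), (fun j : Fin l₂ => d (j.val + 1) ω)))))
          = entH b p (fun ω => ((fun i : Fin t => x (l₁ + 1 + i.val) ω),
            ((fun i : Fin l₁ => x (i.val + 1) ω), (fun j : Fin l₂ => d (j.val + 1) ω)))) :=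
        entH_comp_inj _ (fun w => (w.2.2 ⟨0, hl₂⟩, w))
          (fun w1 w2 h => congrArg Prod.snd h) _ (fun ω => rfl)
      have e2 := key_ineq hb hp (x (l₁ + 1 + t)) (d 1)
        (fun ω => ((fun i : Fin t => x (l₁ + 1 + i.val) ω),
          ((fun i : Fin l₁ => x (i.val + 1) ω), (fun j : Fin l₂ => d (j.val + 1) ω)))) hd1
      have hdd : entH b p (fun ω => (dd (l₁ + 1 + t) 1 ω, d 1 ω)) = entH b p (d 1) := by
        have h := hdown (l₁ + 1 + t) 1 hi1 hi2 le_rfl hl₂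
        unfold condH at h; linarith
      have e3 := key_ineq hb hp (x (l₁ + 1 + t)) (dd (l₁ + 1 + t) 1) (d 1) hdd
      have e4 : entH b p (fun ω => (x (l₁ + 1 + t) ω, dd (l₁ + 1 + t) 1 ω))
          = entH b p (x (l₁ + 1 + t)) := by
        have h := hfun (l₁ + 1 + t) hi1 hi2
        unfold condH at h
        have hswap : entH b p (fun ω => (x (l₁ + 1 + t) ω, dd (l₁ + 1 + t) 1 ω))
            = entH b p (fun ω => (dd (l₁ + 1 + t) 1 ω, x (l₁ + 1 + t) ω)) :=
          (entH_comp_inj _ Prod.swap Prod.swap_injective _ (fun ω => rfl)).symm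
        linarith
      have hs := hstore (l₁ + 1 + t) hi1 hi2
      have he := hent (l₁ + 1 + t) hi1 hi2
      have ihh := ih ht
      rw [e1]
      push_cast
      push_cast at ihh
      linarith
  -- Removal: H((Nx, N'_t), W) = H(W) for W = (M_m, E).
  have hcast : ∀ (n n' : ℕ) (h : n = n') (ω : Ω), cast (congrArg X h) (x n ω) = x n' ω := by
    intro n n' h ω; subst h; rfl
  have rem : ∀ t, t ≤ l₂ →
      entH b p (fun ω => (((fun i : Fin (k - l₂) => x (i.val + 1) ω),
          (fun j : Fin t => x' (j.val + 1) ω)),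
        ((fun i : Fin m => x (l₁ + 1 + i.val) ω),
          ((fun i : Fin l₁ => x (i.val + 1) ω), (fun j : Fin l₂ => d (j.val + 1) ω)))))
      = entH b p (fun ω => ((fun i : Fin m => x (l₁ + 1 + i.val) ω),
          ((fun i : Fin l₁ => x (i.val + 1) ω), (fun j : Fin l₂ => d (j.val + 1) ω)))) := by
    intro t
    induction t with
    | zero =>
      intro _
      -- drop the empty x' tuple, then drop Nx which is a function of (M_m, E)
      have h0 : entH b p (fun ω => (((fun i : Fin (k - l₂) => x (i.val + 1) ω),
            (fun j : Fin 0 => x' (j.val + 1) ω)),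
          ((fun i : Fin m => x (l₁ + 1 + i.val) ω),
            ((fun i : Fin l₁ => x (i.val + 1) ω), (fun j : Fin l₂ => d (j.val + 1) ω)))))
          = entH b p (fun ω => ((fun i : Fin (k - l₂) => x (i.val + 1) ω),
          ((fun i : Fin m => x (l₁ + 1 + i.val) ω),
            ((fun i : Fin l₁ => x (i.val + 1) ω), (fun j : Fin l₂ => d (j.val + 1) ω))))) :=
        entH_comp_inj _ (fun w => ((w.1, ((fun j : Fin 0 => j.elim0) : ∀ j : Fin 0, X' (j.val + 1))), w.2))
          (fun w1 w2 h => by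
            have h1 := congrArg (fun z => z.1.1) h
            have h2 := congrArg (fun z => z.2) h
            exact Prod.ext h1 h2)
          _ (fun ω => by
              have h : (fun j : Fin 0 => x' (j.val + 1) ω)
                  = ((fun j : Fin 0 => j.elim0) : ∀ j : Fin 0, X' (j.val + 1)) := by
                funext j; exact j.elim0
              rw [h])
      rw [h0]
      refine entH_comp_inj _ (fun w : (∀ i : Fin m, X (l₁ + 1 + i.val)) ×
          ((∀ i : Fin l₁, X (i.val + 1)) × (∀ j : Fin l₂, D (j.val + 1))) =>
          ((fun i : Fin (k - l₂) =>
            if h : i.val < l₁ then (w.2.1 ⟨i.val, h⟩ : X (i.val + 1))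
            else cast (congrArg X (by have := i.isLt; omega : l₁ + 1 + (i.val - l₁) = i.val + 1))
              (w.1 ⟨i.val - l₁, by have := i.isLt; omega⟩)), w))
        (fun w1 w2 h => congrArg Prod.snd h) _ (fun ω => ?_)
      refine Prod.ext ?_ rfl
      funext i
      dsimp only
      by_cases h : i.val < l₁
      · rw [dif_pos h]
      · rw [dif_neg h]
        exact (hcast (l₁ + 1 + (i.val - l₁)) (i.val + 1)
          (by have := i.isLt; omega) ω).symm
    | succ t ih =>
      intro ht1
      have ht : t ≤ l₂ := Nat.le_of_succ_le ht1
      have eA : entH b p (fun ω => (((fun i : Fin (k - l₂) => x (i.val + 1) ω),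
            (fun j : Fin (t+1) => x' (j.val + 1) ω)),
          ((fun i : Fin m => x (l₁ + 1 + i.val) ω),
            ((fun i : Fin l₁ => x (i.val + 1) ω), (fun j : Fin l₂ => d (j.val + 1) ω)))))
          = entH b p (fun ω => (x' (t + 1) ω,
            (((fun i : Fin (k - l₂) => x (i.val + 1) ω),
              (fun j : Fin t => x' (j.val + 1) ω)),
            ((fun i : Fin m => x (l₁ + 1 + i.val) ω),
              ((fun i : Fin l₁ => x (i.val + 1) ω), (fun j : Fin l₂ => d (j.val + 1) ω)))))) := by
        refine (entH_comp_inj _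
          (fun w : ((∀ i : Fin (k - l₂), X (i.val + 1)) × (∀ j : Fin (t+1), X' (j.val + 1))) ×
              ((∀ i : Fin m, X (l₁ + 1 + i.val)) ×
                ((∀ i : Fin l₁, X (i.val + 1)) × (∀ j : Fin l₂, D (j.val + 1)))) =>
            (w.1.2 ⟨t, Nat.lt_succ_self t⟩,
              ((w.1.1, (fun j : Fin t => w.1.2 ⟨j.val, Nat.lt_succ_of_lt j.isLt⟩)), w.2)))
          ?_ _ (fun ω => rfl)).symm
        intro w1 w2 h
        have ha := congrArg (fun z => z.1) h
        have hb := congrArg (fun z => z.2.1.2) h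
        have hc := congrArg (fun z => z.2.1.1) h
        have hd := congrArg (fun z => z.2.2) h
        have h12 : w1.1.2 = w2.1.2 :=
          snoc_split_inj (T := fun n => X' (n + 1)) t (Prod.ext ha hb)
        exact Prod.ext (Prod.ext hc h12) hd
      have hrep' : entH b p (fun ω => (x' (t + 1) ω, d (t + 1) ω)) = entH b p (d (t + 1)) := by
        have h := hrep (t + 1) (by omega) ht1
        unfold condH at h; linarith
      have hremstep := removal hb hp (x' (t + 1)) (d (t + 1))
        (fun ω => (((fun i : Fin (k - l₂) => x (i.val + 1) ω),
            (fun j : Fin t => x' (j.val + 1) ω)),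
          ((fun i : Fin m => x (l₁ + 1 + i.val) ω),
            ((fun i : Fin l₁ => x (i.val + 1) ω), (fun j : Fin l₂ => d (j.val + 1) ω)))))
        (fun w => w.2.2.2 ⟨t, by omega⟩) (fun ω => rfl) hrep'
      rw [eA, hremstep]
      exact ih ht
  -- Reconstruction: H(f, W) ≤ H(W).
  have hrecH : entH b p (fun ω => (f ω, ((fun i : Fin (k - l₂) => x (i.val + 1) ω),
        (fun j : Fin l₂ => x' (j.val + 1) ω))))
      = entH b p (fun ω => ((fun i : Fin (k - l₂) => x (i.val + 1) ω),
        (fun j : Fin l₂ => x' (j.val + 1) ω))) := by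
    unfold condH at hrec
    beta_reduce at hrec
    linarith
  have P1 : entH b p (fun ω => (f ω, ((fun i : Fin m => x (l₁ + 1 + i.val) ω),
        ((fun i : Fin l₁ => x (i.val + 1) ω), (fun j : Fin l₂ => d (j.val + 1) ω)))))
      ≤ entH b p (fun ω => ((fun i : Fin m => x (l₁ + 1 + i.val) ω),
        ((fun i : Fin l₁ => x (i.val + 1) ω), (fun j : Fin l₂ => d (j.val + 1) ω)))) := by
    have h1 : entH b p (fun ω => (f ω, ((fun i : Fin m => x (l₁ + 1 + i.val) ω),
          ((fun i : Fin l₁ => x (i.val + 1) ω), (fun j : Fin l₂ => d (j.val + 1) ω)))))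
        ≤ entH b p (fun ω => (f ω, ((((fun i : Fin (k - l₂) => x (i.val + 1) ω),
            (fun j : Fin l₂ => x' (j.val + 1) ω))),
          ((fun i : Fin m => x (l₁ + 1 + i.val) ω),
            ((fun i : Fin l₁ => x (i.val + 1) ω), (fun j : Fin l₂ => d (j.val + 1) ω)))))) :=
      entH_comp_le hb hp _ (fun w => (w.1, w.2.2)) _ (fun ω => rfl)
    have h2 := removal hb hp f
      (fun ω => ((fun i : Fin (k - l₂) => x (i.val + 1) ω),
        (fun j : Fin l₂ => x' (j.val + 1) ω)))
      (fun ω => ((((fun i : Fin (k - l₂) => x (i.val + 1) ω),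
          (fun j : Fin l₂ => x' (j.val + 1) ω))),
        ((fun i : Fin m => x (l₁ + 1 + i.val) ω),
          ((fun i : Fin l₁ => x (i.val + 1) ω), (fun j : Fin l₂ => d (j.val + 1) ω)))))
      Prod.fst (fun ω => rfl) hrecH
    have h3 := rem l₂ le_rfl
    linarith
  -- Combine.
  have t2 : entH b p (fun ω => (f ω, ((fun i : Fin l₁ => x (i.val + 1) ω),
        (fun j : Fin l₂ => d (j.val + 1) ω))))
      ≤ entH b p (fun ω => (f ω, ((fun i : Fin m => x (l₁ + 1 + i.val) ω),
        ((fun i : Fin l₁ => x (i.val + 1) ω), (fun j : Fin l₂ => d (j.val + 1) ω))))) :=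
    entH_comp_le hb hp _ (fun w => (w.1, w.2.2)) _ (fun ω => rfl)
  have t1 := tel m le_rfl
  have hmk : ((m : ℝ)) = (k : ℝ) - (l₁ : ℝ) - (l₂ : ℝ) := by
    have h : m + l₁ + l₂ = k := by omega
    have h2 := congrArg (fun n : ℕ => (n : ℝ)) h
    push_cast at h2
    linarith
  rw [show (k : ℝ) - (l₁ : ℝ) - (l₂ : ℝ) = (m : ℝ) from hmk.symm]
  linarith
end
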